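/- arXiv:1409.6946 — 4 statements merged into one kernel-verified Lean document; each statement's English description precedes it below -/
import Mathlib

section
/- Let ψ : ℝ → ℝ be continuous with ψ(0) = 1, |ψ(x)| < 1 for x ≠ 0, ψ(x) → 0 as |x| → ∞, and (1 - ψ(x))/x^2 → a^2 as x → 0 with a > 0. Fix b > 0. Then for each n, the measure m_n(dz) = dz/(1 + b^2 n^{-2} - ψ(n z)) is well defined (the denominator is strictly positive), and as n → ∞ the measures m_n converge weakly to m(dz) = dz + (π/(a b)) δ_0(dz), in the sense that ∫ f dm_n → ∫ f dm for every continuous compactly supported f : ℝ → ℝ. -/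
open MeasureTheory Real Filter Topology

lemma aux_tendsto {u : ℕ → ℝ} {L : ℝ}
    (h : ∀ θ : ℝ, 0 < θ → ∀ᶠ n in atTop, |u n - L| ≤ θ) :
    Tendsto u atTop (𝓝 L) := by
  rw [Metric.tendsto_atTop]
  intro ε hε
  obtain ⟨N, hN⟩ := eventually_atTop.1 (h (ε/2) (by linarith))
  exact ⟨N, fun n hn => by
    rw [Real.dist_eq]; exact lt_of_le_of_lt (hN n hn) (by linarith)⟩

lemma kernel_interval {c e : ℝ} (hc : 0 < c) (he : 0 < e) (r : ℝ) :
    ∫ x in (-r)..r, (c * x ^ 2 + e)⁻¹ =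
      2 / Real.sqrt (c * e) * arctan (Real.sqrt (c / e) * r) := by
  set k := Real.sqrt (c / e) with hk
  have hk0 : 0 < k := Real.sqrt_pos.2 (by positivity)
  have hk2 : k ^ 2 = c / e := Real.sq_sqrt (by positivity)
  have hce : Real.sqrt (c * e) = e * k := by
    have h1 : (e * k) ^ 2 = c * e := by
      rw [mul_pow, hk2]; field_simp
    rw [← h1, Real.sqrt_sq (by positivity)]
  have hfun : ∀ x : ℝ, (c * x ^ 2 + e)⁻¹ = e⁻¹ * (1 + (k * x) ^ 2)⁻¹ := by
    intro x
    have : c * x ^ 2 + e = e * (1 + (k * x) ^ 2) := by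
      rw [mul_pow, hk2]; field_simp; ring
    rw [this, mul_inv]
  calc ∫ x in (-r)..r, (c * x ^ 2 + e)⁻¹
      = ∫ x in (-r)..r, e⁻¹ * (1 + (k * x) ^ 2)⁻¹ := by
        simp_rw [hfun]
    _ = e⁻¹ * ∫ x in (-r)..r, ((fun y => (1 + y ^ 2)⁻¹) (k * x)) := by
        rw [intervalIntegral.integral_const_mul]
    _ = e⁻¹ * (k⁻¹ • ∫ y in (k * (-r))..(k * r), (1 + y ^ 2)⁻¹) := by
        have := intervalIntegral.integral_comp_mul_left (a := -r) (b := r)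
          (fun y : ℝ => (1 + y ^ 2)⁻¹) hk0.ne'
        rw [this]
    _ = e⁻¹ * k⁻¹ * (arctan (k * r) - arctan (k * (-r))) := by
        rw [integral_inv_one_add_sq, smul_eq_mul]; push_cast; ring
    _ = 2 / Real.sqrt (c * e) * arctan (k * r) := by
        rw [mul_neg, Real.arctan_neg, hce]
        have he' : e ≠ 0 := he.ne'
        have hk' : k ≠ 0 := hk0.ne'
        field_simp
        ring

lemma kernel_Icc {c e : ℝ} (hc : 0 < c) (he : 0 < e) {r : ℝ} (hr : 0 ≤ r) :
    ∫ x in Set.Icc (-r) r, (c * x ^ 2 + e)⁻¹ =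
      2 / Real.sqrt (c * e) * arctan (Real.sqrt (c / e) * r) := by
  rw [MeasureTheory.integral_Icc_eq_integral_Ioc,
    ← intervalIntegral.integral_of_le (by linarith : -r ≤ r), kernel_interval hc he]

lemma kernel_Icc_le {c e : ℝ} (hc : 0 < c) (he : 0 < e) {r : ℝ} (hr : 0 ≤ r) :
    ∫ x in Set.Icc (-r) r, (c * x ^ 2 + e)⁻¹ ≤ π / Real.sqrt (c * e) := by
  rw [kernel_Icc hc he hr]
  have h1 : Real.arctan (Real.sqrt (c / e) * r) ≤ π / 2 :=
    (Real.arctan_lt_pi_div_two _).le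
  have h2 : (0:ℝ) < Real.sqrt (c * e) := Real.sqrt_pos.2 (by positivity)
  calc 2 / Real.sqrt (c * e) * arctan (Real.sqrt (c / e) * r)
      ≤ 2 / Real.sqrt (c * e) * (π / 2) := by
        apply mul_le_mul_of_nonneg_left h1 (by positivity)
    _ = π / Real.sqrt (c * e) := by field_simp

lemma kernel_cont {c e : ℝ} (hc : 0 ≤ c) (he : 0 < e) :
    Continuous (fun x : ℝ => (c * x ^ 2 + e)⁻¹) := by
  apply Continuous.inv₀ (by continuity)
  intro x; positivity

lemma arctan_seq_tendsto {q : ℝ} (hq : 0 < q) :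
    Tendsto (fun n : ℕ => arctan (q * n)) atTop (𝓝 (π / 2)) := by
  have h1 : Tendsto (fun n : ℕ => q * (n : ℝ)) atTop atTop :=
    (tendsto_natCast_atTop_atTop).const_mul_atTop hq
  exact (tendsto_nhds_of_tendsto_nhdsWithin Real.tendsto_arctan_atTop).comp h1

set_option maxHeartbeats 4000000 in
theorem stmt_1 (a b : ℝ) (ha : 0 < a) (hb : 0 < b) (ψ : ℝ → ℝ)
    (hcont : Continuous ψ) (h0 : ψ 0 = 1) (hlt : ∀ x ≠ 0, |ψ x| < 1)
    (hinf : Tendsto ψ (Filter.cocompact ℝ) (𝓝 0))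
    (hquad : Tendsto (fun x => (1 - ψ x) / x ^ 2) (𝓝[≠] 0) (𝓝 (a ^ 2))) :
    (∀ n : ℕ, 1 ≤ n → ∀ z : ℝ, 0 < 1 + b ^ 2 / (n : ℝ) ^ 2 - ψ (n * z)) ∧
    ∀ f : ℝ → ℝ, Continuous f → HasCompactSupport f →
      Tendsto (fun n : ℕ => ∫ z : ℝ, f z / (1 + b ^ 2 / (n : ℝ) ^ 2 - ψ (n * z)))
        atTop (𝓝 ((∫ z : ℝ, f z) + (π / (a * b)) * f 0)) := by
  have hψle : ∀ x : ℝ, ψ x ≤ 1 := by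
    intro x
    rcases eq_or_ne x 0 with h | h
    · rw [h, h0]
    · exact le_of_lt (lt_of_le_of_lt (le_abs_self _) (hlt x h))
  have hψabs : ∀ x : ℝ, |ψ x| ≤ 1 := by
    intro x
    rcases eq_or_ne x 0 with h | h
    · rw [h, h0]; norm_num
    · exact (hlt x h).le
  have hpos : ∀ n : ℕ, 1 ≤ n → ∀ z : ℝ, 0 < 1 + b ^ 2 / (n : ℝ) ^ 2 - ψ (n * z) := by
    intro n hn z
    have hn0 : (0:ℝ) < n := by exact_mod_cast hn
    have h1 : 0 < b ^ 2 / (n : ℝ) ^ 2 := by positivity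
    have h2 := hψle (n * z)
    linarith
  refine ⟨hpos, ?_⟩
  intro f hf hfc
  set ε : ℕ → ℝ := fun n => b ^ 2 / (n : ℝ) ^ 2 with hε
  have hεpos : ∀ n : ℕ, 1 ≤ n → 0 < ε n := by
    intro n hn
    have hn0 : (0:ℝ) < n := by exact_mod_cast hn
    positivity
  have hD : ∀ n : ℕ, 1 ≤ n → ∀ x : ℝ, 0 < 1 + ε n - ψ x := by
    intro n hn x
    have := hεpos n hn
    have := hψle x
    linarith
  set P : ℕ → ℝ → ℝ := fun n x => (1 + ε n - ψ x)⁻¹ - 1 with hP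
  set F : ℕ → ℝ → ℝ := fun n x => f (x / (n : ℝ)) * P n x with hF
  have hfint : Integrable f := hf.integrable_of_hasCompactSupport hfc
  have hcontP : ∀ n : ℕ, 1 ≤ n → Continuous (P n) := by
    intro n hn
    exact (Continuous.inv₀ (by continuity) (fun x => (hD n hn x).ne')).sub continuous_const
  have hcontFf : ∀ n : ℕ, Continuous (fun x : ℝ => f (x / (n : ℝ))) := by
    intro n; exact hf.comp (continuous_id.div_const _)
  have hFfsupp : ∀ n : ℕ, 1 ≤ n → HasCompactSupport (fun x : ℝ => f (x / (n : ℝ))) := by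
    intro n hn
    have hn0 : ((n : ℝ))⁻¹ ≠ 0 := by
      have : (0:ℝ) < n := by exact_mod_cast hn
      positivity
    have := hfc.comp_homeomorph (Homeomorph.mulRight₀ ((n : ℝ))⁻¹ hn0)
    simpa [Function.comp_def, div_eq_mul_inv] using this
  have hFint : ∀ n : ℕ, 1 ≤ n → Integrable (F n) := by
    intro n hn
    exact ((hcontFf n).mul (hcontP n hn)).integrable_of_hasCompactSupport
      ((hFfsupp n hn).mul_right)
  have key : ∀ n : ℕ, 1 ≤ n →
      (∫ z : ℝ, f z / (1 + ε n - ψ (n * z)))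
        = (∫ z : ℝ, f z) + (n : ℝ)⁻¹ * ∫ x : ℝ, F n x := by
    intro n hn
    have hn0 : (0:ℝ) < n := by exact_mod_cast hn
    have h1 : ∀ z : ℝ, f z / (1 + ε n - ψ ((n : ℝ) * z)) = f z + F n ((n : ℝ) * z) := by
      intro z
      have hz : (n : ℝ) * z / n = z := by field_simp
      have hd := hD n hn ((n : ℝ) * z)
      simp only [hF, hP, hz]
      field_simp
      ring
    have hFcomp : Integrable (fun z : ℝ => F n ((n : ℝ) * z)) := by
      exact (hFint n hn).comp_mul_left' (R := (n:ℝ)) hn0.ne'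
    calc (∫ z : ℝ, f z / (1 + ε n - ψ ((n : ℝ) * z)))
        = ∫ z : ℝ, (f z + F n ((n : ℝ) * z)) := by simp_rw [h1]
      _ = (∫ z : ℝ, f z) + ∫ z : ℝ, F n ((n : ℝ) * z) := integral_add hfint hFcomp
      _ = (∫ z : ℝ, f z) + (n : ℝ)⁻¹ * ∫ x : ℝ, F n x := by
          rw [MeasureTheory.Measure.integral_comp_mul_left (F n) (n : ℝ), abs_of_pos (by positivity),
            smul_eq_mul]
  have main : Tendsto (fun n : ℕ => (n : ℝ)⁻¹ * ∫ x : ℝ, F n x) atTop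
      (𝓝 (π / (a * b) * f 0)) := by
    -- support radius
    obtain ⟨R, hRpos, hRsub⟩ := hfc.isBounded.subset_closedBall_lt 0 0
    have hfz : ∀ x : ℝ, R < |x| → f x = 0 := by
      intro x hx
      apply image_eq_zero_of_notMem_tsupport
      intro hmem
      have h1 := hRsub hmem
      rw [Metric.mem_closedBall, Real.dist_eq, sub_zero] at h1
      linarith
    set R' : ℝ := max R 1 with hR'
    have hR'pos : 0 < R' := lt_of_lt_of_le one_pos (le_max_right _ _)
    have hfz' : ∀ x : ℝ, R' < |x| → f x = 0 := fun x hx =>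
      hfz x (lt_of_le_of_lt (le_max_left R 1) hx)
    -- bound on f
    obtain ⟨C, hC⟩ := hf.bounded_above_of_compact_support hfc
    have hCabs : ∀ x : ℝ, |f x| ≤ C := by
      intro x; have := hC x; rwa [Real.norm_eq_abs] at this
    have hC0 : 0 ≤ C := le_trans (abs_nonneg _) (hCabs 0)
    -- quadratic bounds near 0
    have hquadgen : ∀ γ : ℝ, 0 < γ → ∃ η : ℝ, (0 < η ∧ η ≤ 1/(2*a)) ∧ ∀ x : ℝ, |x| ≤ η →
        a^2*(1-γ) * x^2 ≤ 1 - ψ x ∧ 1 - ψ x ≤ a^2*(1+γ) * x^2 := by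
      intro γ hγ
      obtain ⟨δ, hδpos, hδ⟩ := Metric.tendsto_nhdsWithin_nhds.mp hquad (a^2*γ) (by positivity)
      refine ⟨min (δ/2) (1/(2*a)), ⟨lt_min (by linarith) (by positivity), min_le_right _ _⟩, ?_⟩
      intro x hx
      rcases eq_or_ne x 0 with rfl | hx0
      · simp [h0]
      · have hd : dist x 0 < δ := by
          rw [Real.dist_eq, sub_zero]
          exact lt_of_le_of_lt (le_trans hx (min_le_left _ _)) (by linarith)
        have h2 := hδ (Set.mem_compl_singleton_iff.mpr hx0) hd
        rw [Real.dist_eq, abs_lt] at h2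
        have hx2 : (0:ℝ) < x^2 := by positivity
        have hxx : (1 - ψ x) / x ^ 2 * x ^ 2 = 1 - ψ x := div_mul_cancel₀ _ (ne_of_gt hx2)
        constructor
        · nlinarith [h2.1, h2.2]
        · nlinarith [h2.1, h2.2]
    obtain ⟨η₀, ⟨hη₀pos, hη₀le⟩, hη₀quad⟩ := hquadgen (1/2) (by norm_num)
    have hη₀sq : η₀^2 ≤ 1/(4*a^2) := by
      have h1 : η₀^2 ≤ (1/(2*a))^2 := by nlinarith
      have h2 : (1/(2*a))^2 = 1/(4*a^2) := by field_simp; ring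
      linarith
    have hψ58 : ∀ x : ℝ, |x| ≤ η₀ → 5/8 ≤ ψ x := by
      intro x hx
      have h1 := (hη₀quad x hx).2
      have h2 : x^2 ≤ η₀^2 := by nlinarith [abs_nonneg x, sq_abs x]
      have h3 : a^2*(1+1/2) * x^2 ≤ (3/2) * a^2 * (1/(4*a^2)) := by nlinarith
      have h4 : (3/2) * a^2 * (1/(4*a^2)) = 3/8 := by field_simp; ring
      linarith
    have hquadlow : ∀ x : ℝ, |x| ≤ η₀ → a^2/2 * x^2 ≤ 1 - ψ x := by
      intro x hx
      have := (hη₀quad x hx).1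
      nlinarith
    -- uniform gap away from zero
    obtain ⟨ρ, hρpos, hρhalf, hρ⟩ : ∃ ρ : ℝ, 0 < ρ ∧ ρ ≤ 1/2 ∧
        ∀ x : ℝ, η₀ ≤ |x| → ψ x ≤ 1 - ρ := by
      have h2 : {x : ℝ | |ψ x| < 1/2} ∈ cocompact ℝ := by
        have h3 := hinf (Metric.ball_mem_nhds (0:ℝ) (by norm_num : (0:ℝ) < 1/2))
        have h4 : ψ ⁻¹' Metric.ball 0 (1/2) = {x : ℝ | |ψ x| < 1/2} := by
          ext x; simp [Metric.mem_ball, Real.dist_eq]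
        rw [mem_map] at h3
        rwa [h4] at h3
      obtain ⟨K, hK, hKsub⟩ := mem_cocompact.mp h2
      obtain ⟨M, hM⟩ := hK.isBounded.subset_closedBall 0
      have hMabs : ∀ x : ℝ, x ∈ K → |x| ≤ M := by
        intro x hx
        have := hM hx
        rwa [Metric.mem_closedBall, Real.dist_eq, sub_zero] at this
      set S := {x : ℝ | η₀ ≤ |x|} ∩ Set.Icc (-M) M with hS
      have hScompact : IsCompact S :=
        (isCompact_Icc).inter_left (isClosed_le continuous_const continuous_abs)
      rcases S.eq_empty_or_nonempty with hSe | hSne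
      · refine ⟨1/2, by norm_num, le_refl _, ?_⟩
        intro x hx
        have hxK : x ∉ K := by
          intro hxK
          have h3 := hMabs x hxK
          have : x ∈ S := ⟨hx, abs_le.mp h3⟩
          rw [hSe] at this; exact this
        have h4 : |ψ x| < 1/2 := hKsub hxK
        have := le_abs_self (ψ x)
        linarith
      · obtain ⟨x₀, hx₀S, hmax⟩ := hScompact.exists_isMaxOn hSne hcont.continuousOn
        have hx₀ne : x₀ ≠ 0 := by
          intro h
          have := hx₀S.1
          rw [h] at this
          simp only [Set.mem_setOf_eq, abs_zero] at this
          linarith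
        have hlt₀ : ψ x₀ < 1 := lt_of_le_of_lt (le_abs_self _) (hlt x₀ hx₀ne)
        refine ⟨min (1 - ψ x₀) (1/2), lt_min (by linarith) (by norm_num),
          min_le_right _ _, ?_⟩
        intro x hx
        by_cases hxM : |x| ≤ M
        · have hxS : x ∈ S := ⟨hx, abs_le.mp hxM⟩
          have h5 := hmax hxS
          have h6 : min (1 - ψ x₀) (1/2) ≤ 1 - ψ x₀ := min_le_left _ _
          simp only [Set.mem_setOf_eq] at h5
          linarith
        · have hxK : x ∉ K := fun hxK => hxM (hMabs x hxK)
          have h4 : |ψ x| < 1/2 := hKsub hxK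
          have h6 : min (1 - ψ x₀) (1/2) ≤ 1/2 := min_le_right _ _
          have := le_abs_self (ψ x)
          linarith
    -- eventual smallness of ε
    have hεev : ∀ q : ℝ, 0 < q → ∀ᶠ n in atTop, ε n ≤ q := by
      intro q hq
      have h1 : Tendsto (fun n : ℕ => b^2 / (n:ℝ)) atTop (𝓝 0) :=
        tendsto_const_div_atTop_nhds_zero_nat _
      filter_upwards [eventually_ge_atTop 1, h1.eventually_le_const hq] with n hn h2
      have hn1 : (1:ℝ) ≤ (n:ℝ) := by exact_mod_cast hn
      have hnn : (n:ℝ) ≤ (n:ℝ)^2 := by nlinarith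
      have : b^2/(n:ℝ)^2 ≤ b^2/(n:ℝ) :=
        div_le_div_of_nonneg_left (by positivity) (by linarith) hnn
      exact le_trans this h2
    have hsqε : ∀ n : ℕ, 1 ≤ n → Real.sqrt (ε n) = b / (n:ℝ) := by
      intro n hn
      have hn0 : (0:ℝ) < n := by exact_mod_cast hn
      show Real.sqrt (b^2/(n:ℝ)^2) = b/(n:ℝ)
      rw [show b^2/(n:ℝ)^2 = (b/(n:ℝ))^2 by ring]
      exact Real.sqrt_sq (by positivity)
    set s₀ : Set ℝ := Set.Icc (-η₀) η₀ with hs₀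
    have hs₀meas : MeasurableSet s₀ := measurableSet_Icc
    have hvols₀ : (volume s₀).toReal = 2*η₀ := by
      rw [hs₀, Real.volume_Icc, ENNReal.toReal_ofReal (by linarith)]
      ring
    -- integrability on s₀ for denominators
    have hcontD : ∀ n : ℕ, 1 ≤ n → Continuous (fun x : ℝ => (1 + ε n - ψ x)⁻¹) := by
      intro n hn
      exact Continuous.inv₀ (by continuity) (fun x => (hD n hn x).ne')
    set u₁ : ℕ → ℝ := fun n => (n:ℝ)⁻¹ * ∫ x in s₀ᶜ, F n x with hu₁def
    set u₂ : ℕ → ℝ := fun n => (n:ℝ)⁻¹ * ∫ x in s₀, (f (x/(n:ℝ)) - f 0) * P n x with hu₂def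
    set u₃ : ℕ → ℝ := fun n => f 0 * ((n:ℝ)⁻¹ * ∫ x in s₀, (1 + ε n - ψ x)⁻¹) with hu₃def
    set u₄ : ℕ → ℝ := fun n => -(f 0) * (2*η₀*(n:ℝ)⁻¹) with hu₄def
    have hsplit : ∀ n : ℕ, 1 ≤ n →
        (n:ℝ)⁻¹ * ∫ x : ℝ, F n x = u₁ n + u₂ n + u₃ n + u₄ n := by
      intro n hn
      have hIP : IntegrableOn (P n) s₀ := (hcontP n hn).integrableOn_Icc
      have hIF1 : IntegrableOn (fun x : ℝ => (f (x/(n:ℝ)) - f 0) * P n x) s₀ :=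
        (((hcontFf n).sub continuous_const).mul (hcontP n hn)).integrableOn_Icc
      have hIF2 : IntegrableOn (fun x : ℝ => f 0 * P n x) s₀ :=
        (continuous_const.mul (hcontP n hn)).integrableOn_Icc
      have hID : IntegrableOn (fun x : ℝ => (1 + ε n - ψ x)⁻¹) s₀ :=
        (hcontD n hn).integrableOn_Icc
      have e1 : (∫ x : ℝ, F n x) = (∫ x in s₀, F n x) + ∫ x in s₀ᶜ, F n x :=
        (integral_add_compl hs₀meas (hFint n hn)).symm
      have e2 : (∫ x in s₀, F n x)
          = (∫ x in s₀, (f (x/(n:ℝ)) - f 0) * P n x) + f 0 * ∫ x in s₀, P n x := by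
        rw [← integral_const_mul, ← integral_add hIF1 hIF2]
        apply integral_congr_ae
        filter_upwards with x
        simp only [hF]
        ring
      have e3 : (∫ x in s₀, P n x) = (∫ x in s₀, (1 + ε n - ψ x)⁻¹) - 2*η₀ := by
        have h4 : (∫ x in s₀, P n x)
            = (∫ x in s₀, (1 + ε n - ψ x)⁻¹) - ∫ x in s₀, (1:ℝ) := by
          rw [← integral_sub hID ((continuous_const : Continuous fun _ : ℝ => (1:ℝ)).integrableOn_Icc)]
        rw [h4, setIntegral_const, smul_eq_mul, mul_one, measureReal_def, hvols₀]
      rw [e1, e2, e3, hu₁def, hu₂def, hu₃def, hu₄def]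
      ring
    -- the four limits
    have hJ : Tendsto (fun n : ℕ => (n:ℝ)⁻¹ * ∫ x in s₀, (1 + ε n - ψ x)⁻¹)
        atTop (𝓝 (π/(a*b))) := by
      apply aux_tendsto
      intro θ hθ
      have hgc : ContinuousAt (fun t : ℝ => π / (Real.sqrt t * b)) (a^2) := by
        apply ContinuousAt.div continuousAt_const
        · exact (Real.continuous_sqrt.continuousAt).mul continuousAt_const
        · rw [Real.sqrt_sq ha.le]; positivity
      rw [Metric.continuousAt_iff] at hgc
      obtain ⟨δg, hδgpos, hδg⟩ := hgc (θ/2) (by linarith)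
      set γ : ℝ := min (δg/(2*a^2)) (1/2) with hγdef
      have hγpos : 0 < γ := lt_min (by positivity) (by norm_num)
      have hγle : γ ≤ 1/2 := min_le_right _ _
      set c₁ : ℝ := a^2*(1-γ) with hc₁def
      set c₂ : ℝ := a^2*(1+γ) with hc₂def
      have hc₁pos : 0 < c₁ := by
        rw [hc₁def]
        have h1γ : (0:ℝ) < 1 - γ := by linarith
        positivity
      have hc₂pos : 0 < c₂ := by
        rw [hc₂def]
        have h1γ : (0:ℝ) < 1 + γ := by linarith
        positivity
      have hdistg : ∀ c : ℝ, |c - a^2| ≤ a^2*γ → |π/(Real.sqrt c * b) - π/(a*b)| < θ/2 := by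
        intro c hc
        have hd : dist c (a^2) < δg := by
          rw [Real.dist_eq]
          have h1 : a^2*γ ≤ a^2*(δg/(2*a^2)) :=
            mul_le_mul_of_nonneg_left (min_le_left _ _) (by positivity)
          have h2 : a^2*(δg/(2*a^2)) = δg/2 := by field_simp
          linarith
        have h3 := hδg hd
        rwa [Real.dist_eq, Real.sqrt_sq ha.le] at h3
      have habs1 : |c₁ - a^2| ≤ a^2*γ := by
        rw [hc₁def, show a^2*(1-γ) - a^2 = -(a^2*γ) by ring, abs_neg,
          abs_of_nonneg (by positivity)]
      have habs2 : |c₂ - a^2| ≤ a^2*γ := by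
        rw [hc₂def, show a^2*(1+γ) - a^2 = a^2*γ by ring, abs_of_nonneg (by positivity)]
      have hg1 : π/(Real.sqrt c₁ * b) < π/(a*b) + θ/2 := by
        have h4 := abs_lt.mp (hdistg c₁ habs1)
        linarith [h4.2]
      have hg2 : π/(a*b) - θ/2 < π/(Real.sqrt c₂ * b) := by
        have h4 := abs_lt.mp (hdistg c₂ habs2)
        linarith [h4.1]
      obtain ⟨η', ⟨hη'pos, _⟩, hη'quad⟩ := hquadgen γ hγpos
      set η₁ : ℝ := min η' η₀ with hη₁def
      have hη₁pos : 0 < η₁ := lt_min hη'pos hη₀pos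
      have hη₁le : η₁ ≤ η₀ := min_le_right _ _
      have hquadγ : ∀ x : ℝ, |x| ≤ η₁ → c₁ * x^2 ≤ 1 - ψ x ∧ 1 - ψ x ≤ c₂ * x^2 :=
        fun x hx => hη'quad x (le_trans hx (min_le_left _ _))
      set κ : ℝ := a^2/2 * η₁^2 with hκdef
      have hκpos : 0 < κ := by positivity
      set s₁ : Set ℝ := Set.Icc (-η₁) η₁ with hs₁def
      have hs₁meas : MeasurableSet s₁ := measurableSet_Icc
      have hs₁sub : s₁ ⊆ s₀ := Set.Icc_subset_Icc (by linarith) (by linarith)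
      have hsc₁ : (0:ℝ) < Real.sqrt c₁ := Real.sqrt_pos.2 hc₁pos
      have hsc₂ : (0:ℝ) < Real.sqrt c₂ := Real.sqrt_pos.2 hc₂pos
      set q₂ : ℝ := Real.sqrt c₂ * b * θ / 4 with hq₂def
      have hq₂pos : 0 < q₂ := by positivity
      have harc : Tendsto (fun n : ℕ => arctan ((Real.sqrt c₂ * η₁ / b) * n)) atTop
          (𝓝 (π/2)) := arctan_seq_tendsto (by positivity)
      have hev2 : ∀ᶠ n : ℕ in atTop, π/2 - q₂ < arctan ((Real.sqrt c₂ * η₁ / b) * n) :=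
        harc.eventually (eventually_gt_nhds (by linarith))
      have hev3 : ∀ᶠ n : ℕ in atTop, (2*η₀/κ) / (n:ℝ) ≤ θ/2 :=
        (tendsto_const_div_atTop_nhds_zero_nat (2*η₀/κ)).eventually_le_const (by linarith)
      filter_upwards [eventually_ge_atTop 1, hev2, hev3] with n hn harcn hres
      have hn0 : (0:ℝ) < n := by exact_mod_cast hn
      have hen := hεpos n hn
      have hsq := hsqε n hn
      have hID : IntegrableOn (fun x : ℝ => (1 + ε n - ψ x)⁻¹) s₀ :=
        (hcontD n hn).integrableOn_Icc
      have hK1 : IntegrableOn (fun x : ℝ => (c₁ * x^2 + ε n)⁻¹) s₁ :=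
        (kernel_cont hc₁pos.le hen).integrableOn_Icc
      have hK2 : IntegrableOn (fun x : ℝ => (c₂ * x^2 + ε n)⁻¹) s₁ :=
        (kernel_cont hc₂pos.le hen).integrableOn_Icc
      have hkercalc : ∀ c : ℝ, 0 < c → (n:ℝ)⁻¹ * ∫ x in s₁, (c * x^2 + ε n)⁻¹
          = 2/(Real.sqrt c * b) * arctan ((Real.sqrt c * η₁/b) * n) := by
        intro c hc
        have hscpos : (0:ℝ) < Real.sqrt c := Real.sqrt_pos.2 hc
        rw [hs₁def, kernel_Icc hc hen hη₁pos.le]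
        have h5 : Real.sqrt (c * ε n) = Real.sqrt c * (b/(n:ℝ)) := by
          rw [Real.sqrt_mul hc.le, hsq]
        have h6 : Real.sqrt (c / ε n) = Real.sqrt c * ((n:ℝ)/b) := by
          rw [Real.sqrt_div hc.le, hsq]
          field_simp
        rw [h5, h6]
        have harg : Real.sqrt c * ((n:ℝ)/b) * η₁ = (Real.sqrt c * η₁/b) * n := by ring
        rw [harg]
        have hb0 : b ≠ 0 := hb.ne'
        have hsc0 : Real.sqrt c ≠ 0 := hscpos.ne'
        field_simp
      have hupper : (n:ℝ)⁻¹ * ∫ x in s₀, (1 + ε n - ψ x)⁻¹ ≤ π/(a*b) + θ := by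
        have hsplit2 : (∫ x in s₀, (1 + ε n - ψ x)⁻¹)
            = (∫ x in s₁, (1 + ε n - ψ x)⁻¹) + ∫ x in s₀ \ s₁, (1 + ε n - ψ x)⁻¹ := by
          have h11 := integral_inter_add_diff (s := s₀) (t := s₁) hs₁meas hID
          rw [Set.inter_eq_self_of_subset_right hs₁sub] at h11
          exact h11.symm
        have hb1 : (∫ x in s₁, (1 + ε n - ψ x)⁻¹) ≤ ∫ x in s₁, (c₁ * x^2 + ε n)⁻¹ := by
          apply setIntegral_mono_on (hID.mono_set hs₁sub) hK1 hs₁meas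
          intro x hx
          have hxabs : |x| ≤ η₁ := abs_le.mpr ⟨by linarith [hx.1], hx.2⟩
          have h7 := (hquadγ x hxabs).1
          exact inv_anti₀ (by positivity) (by linarith)
        have hb2 : (∫ x in s₀ \ s₁, (1 + ε n - ψ x)⁻¹) ≤ κ⁻¹ * (2*η₀) := by
          have hmeas : MeasurableSet (s₀ \ s₁) := hs₀meas.diff hs₁meas
          have hvolfin : volume (s₀ \ s₁) < ⊤ :=
            lt_of_le_of_lt (measure_mono Set.diff_subset)
              (by rw [hs₀, Real.volume_Icc]; exact ENNReal.ofReal_lt_top)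
          have hconst : IntegrableOn (fun _ : ℝ => κ⁻¹) (s₀ \ s₁) :=
            integrableOn_const hvolfin.ne
          have hb3 : (∫ x in s₀ \ s₁, (1 + ε n - ψ x)⁻¹) ≤ ∫ _x in s₀ \ s₁, κ⁻¹ := by
            apply setIntegral_mono_on (hID.mono_set Set.diff_subset) hconst hmeas
            intro x hx
            have hx0 : |x| ≤ η₀ := abs_le.mpr ⟨by linarith [hx.1.1], hx.1.2⟩
            have hx1 : η₁ ≤ |x| := by
              by_contra hcon
              push_neg at hcon
              exact hx.2 (Set.mem_Icc.mpr (abs_le.mp hcon.le))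
            have hxsq : η₁^2 ≤ x^2 := by
              calc η₁^2 ≤ |x|^2 := pow_le_pow_left₀ hη₁pos.le hx1 2
                _ = x^2 := sq_abs x
            have h9 : κ ≤ 1 - ψ x := by
              have h10 := hquadlow x hx0
              have h12 : a^2/2 * η₁^2 ≤ a^2/2 * x^2 :=
                mul_le_mul_of_nonneg_left hxsq (by positivity)
              rw [hκdef]
              linarith
            exact inv_anti₀ hκpos (by linarith)
          have hvol : (∫ _x in s₀ \ s₁, (κ⁻¹ : ℝ)) ≤ κ⁻¹ * (2*η₀) := by
            rw [setIntegral_const, smul_eq_mul]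
            have h1 : volume (s₀ \ s₁) ≤ volume s₀ := measure_mono Set.diff_subset
            have h2 : (volume (s₀ \ s₁)).toReal ≤ (volume s₀).toReal := by
              apply ENNReal.toReal_mono _ h1
              rw [hs₀, Real.volume_Icc]; exact ENNReal.ofReal_ne_top
            rw [hvols₀] at h2
            calc (volume (s₀ \ s₁)).toReal * κ⁻¹ ≤ (2*η₀) * κ⁻¹ :=
                  mul_le_mul_of_nonneg_right h2 (by positivity)
              _ = κ⁻¹ * (2*η₀) := by ring
          linarith
        have hkb : (n:ℝ)⁻¹ * ∫ x in s₁, (c₁ * x^2 + ε n)⁻¹ ≤ π/(Real.sqrt c₁ * b) := by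
          rw [hkercalc c₁ hc₁pos]
          have h10 : arctan ((Real.sqrt c₁ * η₁/b) * n) ≤ π/2 :=
            (Real.arctan_lt_pi_div_two _).le
          calc 2/(Real.sqrt c₁ * b) * arctan ((Real.sqrt c₁ * η₁/b) * n)
              ≤ 2/(Real.sqrt c₁ * b) * (π/2) :=
                mul_le_mul_of_nonneg_left h10 (by positivity)
            _ = π/(Real.sqrt c₁ * b) := by field_simp
        have hIK1 : (∫ x in s₁, (1 + ε n - ψ x)⁻¹) ≤ (∫ x in s₁, (c₁ * x^2 + ε n)⁻¹) := hb1
        calc (n:ℝ)⁻¹ * ∫ x in s₀, (1 + ε n - ψ x)⁻¹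
            = (n:ℝ)⁻¹ * ((∫ x in s₁, (1 + ε n - ψ x)⁻¹)
              + ∫ x in s₀ \ s₁, (1 + ε n - ψ x)⁻¹) := by rw [hsplit2]
          _ ≤ (n:ℝ)⁻¹ * ((∫ x in s₁, (c₁ * x^2 + ε n)⁻¹) + κ⁻¹*(2*η₀)) := by
              apply mul_le_mul_of_nonneg_left (by linarith) (by positivity)
          _ = (n:ℝ)⁻¹ * (∫ x in s₁, (c₁ * x^2 + ε n)⁻¹) + (2*η₀/κ)/(n:ℝ) := by
              field_simp
          _ ≤ π/(Real.sqrt c₁ * b) + θ/2 := by linarith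
          _ ≤ π/(a*b) + θ := by linarith
      have hlower : π/(a*b) - θ ≤ (n:ℝ)⁻¹ * ∫ x in s₀, (1 + ε n - ψ x)⁻¹ := by
        have hb1 : (∫ x in s₁, (c₂ * x^2 + ε n)⁻¹) ≤ ∫ x in s₁, (1 + ε n - ψ x)⁻¹ := by
          apply setIntegral_mono_on hK2 (hID.mono_set hs₁sub) hs₁meas
          intro x hx
          have hxabs : |x| ≤ η₁ := abs_le.mpr ⟨by linarith [hx.1], hx.2⟩
          have h7 := (hquadγ x hxabs).2
          exact inv_anti₀ (hD n hn x) (by linarith)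
        have hb2 : (∫ x in s₁, (1 + ε n - ψ x)⁻¹) ≤ ∫ x in s₀, (1 + ε n - ψ x)⁻¹ := by
          apply setIntegral_mono_set hID
          · exact Filter.Eventually.of_forall (fun x => inv_nonneg.mpr (hD n hn x).le)
          · exact HasSubset.Subset.eventuallyLE hs₁sub
        have hkb : 2/(Real.sqrt c₂ * b) * (π/2 - q₂)
            ≤ (n:ℝ)⁻¹ * ∫ x in s₁, (c₂ * x^2 + ε n)⁻¹ := by
          rw [hkercalc c₂ hc₂pos]
          exact mul_le_mul_of_nonneg_left harcn.le (by positivity)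
        have hq2calc : 2/(Real.sqrt c₂ * b) * (π/2 - q₂) = π/(Real.sqrt c₂ * b) - θ/2 := by
          rw [hq₂def]
          field_simp
          ring
        calc π/(a*b) - θ ≤ π/(Real.sqrt c₂ * b) - θ/2 := by linarith
          _ = 2/(Real.sqrt c₂ * b) * (π/2 - q₂) := hq2calc.symm
          _ ≤ (n:ℝ)⁻¹ * ∫ x in s₁, (c₂ * x^2 + ε n)⁻¹ := hkb
          _ ≤ (n:ℝ)⁻¹ * ∫ x in s₀, (1 + ε n - ψ x)⁻¹ := by
              apply mul_le_mul_of_nonneg_left (le_trans hb1 hb2) (by positivity)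
      rw [abs_le]
      constructor <;> linarith
    have hu3 : Tendsto u₃ atTop (𝓝 (f 0 * (π/(a*b)))) := hJ.const_mul (f 0)
    have hu4 : Tendsto u₄ atTop (𝓝 0) := by
      rw [hu₄def]
      have h1 : Tendsto (fun n : ℕ => 2*η₀*(n:ℝ)⁻¹) atTop (𝓝 0) := by
        have := tendsto_const_div_atTop_nhds_zero_nat (2*η₀)
        simpa [div_eq_mul_inv] using this
      simpa using h1.const_mul (-(f 0))
    have hu2 : Tendsto u₂ atTop (𝓝 0) := by
      apply aux_tendsto
      intro θ hθ
      set C₀ : ℝ := π / (Real.sqrt (a^2/2) * b) with hC₀def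
      have hsa : (0:ℝ) < Real.sqrt (a^2/2) := Real.sqrt_pos.2 (by positivity)
      have hC₀pos : 0 < C₀ := by rw [hC₀def]; positivity
      obtain ⟨δf, hδfpos, hδf⟩ :=
        Metric.continuousAt_iff.mp (hf.continuousAt (x := 0)) (θ/(C₀+1)) (by positivity)
      have hev1 : ∀ᶠ n : ℕ in atTop, η₀ / (n:ℝ) ≤ δf/2 :=
        (tendsto_const_div_atTop_nhds_zero_nat η₀).eventually_le_const (by linarith)
      filter_upwards [eventually_ge_atTop 1, hεev (1/4) (by norm_num), hev1]
        with n hn hε4 hηn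
      have hn0 : (0:ℝ) < n := by exact_mod_cast hn
      have hen := hεpos n hn
      have hsq := hsqε n hn
      have hPbound : ∀ x : ℝ, x ∈ s₀ →
          |f (x/(n:ℝ)) - f 0| * |P n x| ≤ (θ/(C₀+1)) * (a^2/2 * x^2 + ε n)⁻¹ := by
        intro x hx
        have hxabs : |x| ≤ η₀ := abs_le.mpr ⟨by linarith [hx.1], hx.2⟩
        have hψx := hψ58 x hxabs
        have hDx := hD n hn x
        have hletop : 1 + ε n - ψ x ≤ 1 := by linarith
        have hP0 : 0 ≤ P n x := by
          simp only [hP]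
          have h1 := inv_anti₀ hDx hletop
          rw [inv_one] at h1
          linarith
        have hPle : P n x ≤ (a^2/2 * x^2 + ε n)⁻¹ := by
          simp only [hP]
          have h2 : a^2/2 * x^2 + ε n ≤ 1 + ε n - ψ x := by
            have := hquadlow x hxabs
            linarith
          have h3 := inv_anti₀ (by positivity : (0:ℝ) < a^2/2 * x^2 + ε n) h2
          linarith
        have hfB : |f (x/(n:ℝ)) - f 0| ≤ θ/(C₀+1) := by
          have hdist : dist (x/(n:ℝ)) 0 < δf := by
            rw [Real.dist_eq, sub_zero, abs_div, abs_of_pos hn0]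
            have h4 : |x|/(n:ℝ) ≤ η₀/(n:ℝ) :=
              (div_le_div_iff_of_pos_right hn0).mpr hxabs
            linarith
          have h5 := hδf hdist
          rw [Real.dist_eq] at h5
          exact h5.le
        apply mul_le_mul hfB _ (abs_nonneg _) (by positivity)
        rw [abs_of_nonneg hP0]
        exact hPle
      have hIg : IntegrableOn (fun x : ℝ => (f (x/(n:ℝ)) - f 0) * P n x) s₀ :=
        (((hcontFf n).sub continuous_const).mul (hcontP n hn)).integrableOn_Icc
      have hIK : IntegrableOn (fun x : ℝ => (θ/(C₀+1)) * (a^2/2 * x^2 + ε n)⁻¹) s₀ :=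
        (continuous_const.mul (kernel_cont (by positivity) hen)).integrableOn_Icc
      have habs : |∫ x in s₀, (f (x/(n:ℝ)) - f 0) * P n x|
          ≤ ∫ x in s₀, (θ/(C₀+1)) * (a^2/2 * x^2 + ε n)⁻¹ := by
        have hIabs : IntegrableOn (fun x : ℝ => |f (x/(n:ℝ)) - f 0| * |P n x|) s₀ :=
          ((((hcontFf n).sub continuous_const).abs).mul ((hcontP n hn).abs)).integrableOn_Icc
        calc |∫ x in s₀, (f (x/(n:ℝ)) - f 0) * P n x|
            ≤ ∫ x in s₀, |f (x/(n:ℝ)) - f 0| * |P n x| := by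
              simpa [Real.norm_eq_abs, abs_mul] using
                norm_integral_le_integral_norm (μ := volume.restrict s₀)
                  (fun x => (f (x/(n:ℝ)) - f 0) * P n x)
          _ ≤ ∫ x in s₀, (θ/(C₀+1)) * (a^2/2 * x^2 + ε n)⁻¹ :=
              setIntegral_mono_on hIabs hIK hs₀meas hPbound
      have hker : (n:ℝ)⁻¹ * ∫ x in s₀, (a^2/2 * x^2 + ε n)⁻¹ ≤ C₀ := by
        have h5 := kernel_Icc_le (by positivity : (0:ℝ) < a^2/2) hen hη₀pos.le
        have h6 : Real.sqrt (a^2/2 * ε n) = Real.sqrt (a^2/2) * (b/(n:ℝ)) := by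
          rw [Real.sqrt_mul (by positivity), hsq]
        calc (n:ℝ)⁻¹ * ∫ x in s₀, (a^2/2 * x^2 + ε n)⁻¹
            ≤ (n:ℝ)⁻¹ * (π / Real.sqrt (a^2/2 * ε n)) :=
              mul_le_mul_of_nonneg_left h5 (by positivity)
          _ = C₀ := by
              rw [h6, hC₀def]
              field_simp
      have hknn : 0 ≤ ∫ x in s₀, (a^2/2 * x^2 + ε n)⁻¹ :=
        setIntegral_nonneg hs₀meas (fun x _ => by positivity)
      rw [sub_zero]
      have heq2 : |u₂ n| = (n:ℝ)⁻¹ * |∫ x in s₀, (f (x/(n:ℝ)) - f 0) * P n x| := by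
        simp only [hu₂def]
        rw [abs_mul, abs_of_pos (by positivity : (0:ℝ) < (n:ℝ)⁻¹)]
      rw [heq2]
      have hfin : θ/(C₀+1) * (C₀+1) = θ := by field_simp
      calc (n:ℝ)⁻¹ * |∫ x in s₀, (f (x/(n:ℝ)) - f 0) * P n x|
          ≤ (n:ℝ)⁻¹ * ∫ x in s₀, (θ/(C₀+1)) * (a^2/2 * x^2 + ε n)⁻¹ :=
            mul_le_mul_of_nonneg_left habs (by positivity)
        _ = (θ/(C₀+1)) * ((n:ℝ)⁻¹ * ∫ x in s₀, (a^2/2 * x^2 + ε n)⁻¹) := by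
            rw [integral_const_mul]
            ring
        _ ≤ (θ/(C₀+1)) * C₀ := mul_le_mul_of_nonneg_left hker (by positivity)
        _ ≤ (θ/(C₀+1)) * (C₀+1) := by
            apply mul_le_mul_of_nonneg_left (by linarith) (by positivity)
        _ = θ := hfin
    have hu1 : Tendsto u₁ atTop (𝓝 0) := by
      apply aux_tendsto
      intro θ hθ
      set θ₁ : ℝ := ρ*θ/(6*R'*(C+1)) with hθ₁def
      have hθ₁pos : 0 < θ₁ := by rw [hθ₁def]; positivity
      obtain ⟨M', hM'0, hMbound⟩ : ∃ M : ℝ, 0 ≤ M ∧ ∀ x : ℝ, M < |x| → |ψ x| ≤ θ₁ := by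
        have h2 : {x : ℝ | |ψ x| < θ₁} ∈ cocompact ℝ := by
          have h3 := hinf (Metric.ball_mem_nhds (0:ℝ) hθ₁pos)
          have h4 : ψ ⁻¹' Metric.ball 0 θ₁ = {x : ℝ | |ψ x| < θ₁} := by
            ext x; simp [Metric.mem_ball, Real.dist_eq]
          rw [mem_map] at h3
          rwa [h4] at h3
        obtain ⟨K, hK, hKsub⟩ := mem_cocompact.mp h2
        obtain ⟨M, hM⟩ := hK.isBounded.subset_closedBall 0
        refine ⟨max M 0, le_max_right _ _, ?_⟩
        intro x hx
        have hxK : x ∉ K := by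
          intro hxK
          have h5 := hM hxK
          rw [Metric.mem_closedBall, Real.dist_eq, sub_zero] at h5
          have := le_max_left M 0
          linarith
        exact (hKsub hxK).le
      have hev3 : ∀ᶠ n : ℕ in atTop, (2*M'*(C+1)/ρ)/(n:ℝ) ≤ θ/3 :=
        (tendsto_const_div_atTop_nhds_zero_nat (2*M'*(C+1)/ρ)).eventually_le_const
          (by linarith)
      filter_upwards [eventually_ge_atTop 1, hεev θ₁ hθ₁pos, hev3] with n hn hεn hM'n
      have hn0 : (0:ℝ) < n := by exact_mod_cast hn
      have hen := hεpos n hn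
      set T : Set ℝ := Set.Icc (-(R'*(n:ℝ))) (R'*(n:ℝ)) with hTdef
      have hTmeas : MeasurableSet T := measurableSet_Icc
      have hvolT : (volume T).toReal = 2*R'*(n:ℝ) := by
        rw [hTdef, Real.volume_Icc, ENNReal.toReal_ofReal (by linarith [mul_pos hR'pos hn0])]
        ring
      have hvolTfin : volume T < ⊤ := by
        rw [hTdef, Real.volume_Icc]
        exact ENNReal.ofReal_lt_top
      have hFzero : ∀ x : ℝ, x ∉ T → F n x = 0 := by
        intro x hx
        have hxabs : R'*(n:ℝ) < |x| := by
          by_contra hcon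
          push_neg at hcon
          exact hx (Set.mem_Icc.mpr (abs_le.mp hcon))
        have hfx : f (x/(n:ℝ)) = 0 := by
          apply hfz'
          rw [abs_div, abs_of_pos hn0]
          rw [lt_div_iff₀ hn0]
          linarith
        simp only [hF, hfx, zero_mul]
      set g : ℝ → ℝ := fun x => (C/ρ) * (|ψ x| + ε n) with hgdef
      have hgcont : Continuous g := by
        rw [hgdef]
        exact continuous_const.mul ((hcont.abs).add continuous_const)
      have hgnn : ∀ x : ℝ, 0 ≤ g x := by
        intro x
        rw [hgdef]
        have := abs_nonneg (ψ x)
        positivity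
      have hFbound : ∀ x : ℝ, x ∈ s₀ᶜ ∩ T → |F n x| ≤ g x := by
        intro x hx
        have hxout : η₀ < |x| := by
          have hxns : x ∉ s₀ := hx.1
          by_contra hcon
          push_neg at hcon
          exact hxns (Set.mem_Icc.mpr (abs_le.mp hcon))
        have hψx := hρ x hxout.le
        have hDx := hD n hn x
        have hDρ : ρ ≤ 1 + ε n - ψ x := by linarith
        have hPeq : P n x = (ψ x - ε n) / (1 + ε n - ψ x) := by
          simp only [hP]
          field_simp [hDx.ne']
          ring
        have hPabs : |P n x| ≤ (|ψ x| + ε n)/ρ := by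
          rw [hPeq, abs_div, abs_of_pos hDx]
          apply div_le_div₀ (by positivity) _ hρpos hDρ
          calc |ψ x - ε n| ≤ |ψ x| + |ε n| := abs_sub _ _
            _ = |ψ x| + ε n := by rw [abs_of_nonneg hen.le]
        calc |F n x| = |f (x/(n:ℝ))| * |P n x| := by rw [hF]; exact abs_mul _ _
          _ ≤ C * ((|ψ x| + ε n)/ρ) := by
              apply mul_le_mul (hCabs _) hPabs (abs_nonneg _) hC0
          _ = g x := by rw [hgdef]; ring
      -- split the integral
      have hIF : IntegrableOn (F n) s₀ᶜ := (hFint n hn).integrableOn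
      have hsplit3 : (∫ x in s₀ᶜ, F n x) = ∫ x in s₀ᶜ ∩ T, F n x := by
        have h6 := integral_inter_add_diff (s := s₀ᶜ) (t := T) hTmeas hIF
        have h7 : (∫ x in s₀ᶜ \ T, F n x) = 0 :=
          setIntegral_eq_zero_of_forall_eq_zero (fun x hx => hFzero x hx.2)
        linarith [h6]
      have habs2 : |∫ x in s₀ᶜ, F n x| ≤ ∫ x in T, g x := by
        rw [hsplit3]
        have hmeas6 : MeasurableSet (s₀ᶜ ∩ T) := hs₀meas.compl.inter hTmeas
        have hIFabs : IntegrableOn (fun x => |F n x|) (s₀ᶜ ∩ T) :=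
          ((hFint n hn).abs).integrableOn
        have hIg : IntegrableOn g (s₀ᶜ ∩ T) :=
          (hgcont.integrableOn_Icc).mono_set Set.inter_subset_right
        calc |∫ x in s₀ᶜ ∩ T, F n x| ≤ ∫ x in s₀ᶜ ∩ T, |F n x| := by
              simpa [Real.norm_eq_abs] using
                norm_integral_le_integral_norm (μ := volume.restrict (s₀ᶜ ∩ T)) (F n)
          _ ≤ ∫ x in s₀ᶜ ∩ T, g x := setIntegral_mono_on hIFabs hIg hmeas6 hFbound
          _ ≤ ∫ x in T, g x := by
              apply setIntegral_mono_set hgcont.integrableOn_Icc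
                (Filter.Eventually.of_forall hgnn)
                (HasSubset.Subset.eventuallyLE Set.inter_subset_right)
      -- estimate ∫_T |ψ|
      have hψT : (∫ x in T, |ψ x|) ≤ 2*M' + θ₁*(2*R'*(n:ℝ)) := by
        set ind : ℝ → ℝ := (Set.Icc (-M') M').indicator (fun _ => (1:ℝ)) with hinddef
        have hindint : Integrable ind :=
          (integrableOn_const (by rw [Real.volume_Icc]; exact ENNReal.ofReal_ne_top)).integrable_indicator
            measurableSet_Icc
        have hindnn : ∀ x : ℝ, 0 ≤ ind x := fun x =>
          Set.indicator_nonneg (fun _ _ => zero_le_one) x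
        have hbnd : ∀ x : ℝ, x ∈ T → |ψ x| ≤ ind x + θ₁ := by
          intro x _
          by_cases hxM : |x| ≤ M'
          · have : ind x = 1 := by
              rw [hinddef, Set.indicator_of_mem (Set.mem_Icc.mpr (abs_le.mp hxM))]
            rw [this]
            have := hψabs x
            linarith
          · push_neg at hxM
            have h8 := hMbound x hxM
            have h9 : 0 ≤ ind x := hindnn x
            linarith
        have hIψ : IntegrableOn (fun x : ℝ => |ψ x|) T := (hcont.abs).integrableOn_Icc
        have hIind : IntegrableOn (fun x : ℝ => ind x + θ₁) T :=
          (hindint.integrableOn).add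
            (integrableOn_const hvolTfin.ne)
        calc (∫ x in T, |ψ x|) ≤ ∫ x in T, (ind x + θ₁) :=
              setIntegral_mono_on hIψ hIind hTmeas hbnd
          _ = (∫ x in T, ind x) + ∫ _x in T, θ₁ :=
              integral_add (hindint.integrableOn)
                (integrableOn_const hvolTfin.ne)
          _ ≤ 2*M' + θ₁*(2*R'*(n:ℝ)) := by
              have h10 : (∫ x in T, ind x) ≤ ∫ x : ℝ, ind x :=
                setIntegral_le_integral hindint (Filter.Eventually.of_forall hindnn)
              have h11 : (∫ x : ℝ, ind x) = 2*M' := by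
                rw [hinddef, integral_indicator measurableSet_Icc, setIntegral_const,
                  smul_eq_mul, mul_one, measureReal_def, Real.volume_Icc,
                  ENNReal.toReal_ofReal (by linarith)]
                ring
              have h12 : (∫ _x in T, (θ₁:ℝ)) = θ₁*(2*R'*(n:ℝ)) := by
                rw [setIntegral_const, smul_eq_mul, measureReal_def, hvolT]
                ring
              rw [h12]
              linarith
      -- compute ∫_T g
      have hgT : (∫ x in T, g x) ≤ (C/ρ) * (2*M' + θ₁*(2*R'*(n:ℝ)) + ε n * (2*R'*(n:ℝ))) := by
        have h13 : (∫ x in T, g x)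
            = (C/ρ) * ((∫ x in T, |ψ x|) + ε n * (2*R'*(n:ℝ))) := by
          rw [hgdef]
          rw [integral_const_mul]
          congr 1
          rw [integral_add ((hcont.abs).integrableOn_Icc)
            (integrableOn_const hvolTfin.ne)]
          congr 1
          rw [setIntegral_const, smul_eq_mul, measureReal_def, hvolT]
          ring
        rw [h13]
        apply mul_le_mul_of_nonneg_left _ (by positivity)
        linarith [hψT]
      -- final arithmetic
      rw [sub_zero]
      have heq3 : |u₁ n| = (n:ℝ)⁻¹ * |∫ x in s₀ᶜ, F n x| := by
        simp only [hu₁def]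
        rw [abs_mul, abs_of_pos (by positivity : (0:ℝ) < (n:ℝ)⁻¹)]
      rw [heq3]
      have h14 : (C/ρ) * (2*M') ≤ 2*M'*(C+1)/ρ := by
        rw [show (C/ρ) * (2*M') = 2*M'*C/ρ by ring]
        apply (div_le_div_iff_of_pos_right hρpos).mpr
        have h15 := mul_le_mul_of_nonneg_left (show C ≤ C+1 by linarith)
          (show (0:ℝ) ≤ 2*M' by linarith)
        linarith
      have ht1 : (C/ρ)*(2*M')*(n:ℝ)⁻¹ ≤ θ/3 := by
        have h15 := mul_le_mul_of_nonneg_right h14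
          (show (0:ℝ) ≤ (n:ℝ)⁻¹ by positivity)
        have h16 : 2*M'*(C+1)/ρ*(n:ℝ)⁻¹ = (2*M'*(C+1)/ρ)/(n:ℝ) := by
          ring
        linarith
      have ht2 : (C/ρ)*(2*R')*θ₁ ≤ θ/3 := by
        have h17 : (C/ρ)*(2*R')*θ₁ = (C/(C+1))*(θ/3) := by
          rw [hθ₁def]
          field_simp
          ring
        have h18 : C/(C+1) ≤ 1 := by
          rw [div_le_one (by linarith)]
          linarith
        rw [h17]
        have h19 := mul_le_mul_of_nonneg_right h18 (show (0:ℝ) ≤ θ/3 by linarith)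
        linarith
      have ht3 : (C/ρ)*(2*R')*(ε n) ≤ θ/3 := by
        have h20 : (C/ρ)*(2*R')*(ε n) ≤ (C/ρ)*(2*R')*θ₁ :=
          mul_le_mul_of_nonneg_left hεn (by positivity)
        linarith
      calc (n:ℝ)⁻¹ * |∫ x in s₀ᶜ, F n x|
          ≤ (n:ℝ)⁻¹ * ((C/ρ) * (2*M' + θ₁*(2*R'*(n:ℝ)) + ε n * (2*R'*(n:ℝ)))) :=
            mul_le_mul_of_nonneg_left (le_trans habs2 hgT) (by positivity)
        _ = (C/ρ)*(2*M')*(n:ℝ)⁻¹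
              + ((C/ρ)*(2*R')*θ₁ + (C/ρ)*(2*R')*(ε n)) * ((n:ℝ)⁻¹*(n:ℝ)) := by
            ring
        _ = (C/ρ)*(2*M')*(n:ℝ)⁻¹ + (C/ρ)*(2*R')*θ₁ + (C/ρ)*(2*R')*(ε n) := by
            rw [inv_mul_cancel₀ hn0.ne']
            ring
        _ ≤ θ/3 + θ/3 + θ/3 := by linarith
        _ = θ := by ring
    have hcomb : Tendsto (fun n : ℕ => u₁ n + u₂ n + u₃ n + u₄ n) atTop
        (𝓝 (0 + 0 + f 0 * (π/(a*b)) + 0)) := ((hu1.add hu2).add hu3).add hu4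
    have heq : π/(a*b) * f 0 = 0 + 0 + f 0 * (π/(a*b)) + 0 := by ring
    rw [heq]
    apply hcomb.congr'
    filter_upwards [eventually_ge_atTop 1] with n hn
    exact (hsplit n hn).symm
  refine (tendsto_const_nhds.add main).congr' ?_
  filter_upwards [eventually_ge_atTop 1] with n hn
  exact (key n hn).symm
end

section
/- Let L_N^0 be the set of continuous functions f : ℝ^N → ℝ that are linear on each cell of ℝ^N (a cell being the set of points realizing a fixed weak total ordering of coordinates) and invariant under simultaneous shifts f(x_1+h,…,x_N+h) = f(x). Let π = (π_1, π_2) be an ordered partition of {1,…,N} into two nonempty parts and U_π = {x ∈ ℝ^N : x_i > x_j for all i ∈ π_1, j ∈ π_2}. Then there exist functions f_1 : ℝ^{π_1} → ℝ and f_2 : ℝ^{π_2} → ℝ, each continuous and linear on cells, such that f(x) = f_1(x_i ; i ∈ π_1) + f_2(x_j ; j ∈ π_2) for all x ∈ U_π. -/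
open Finset


/-- `f` is linear (affine) on each cell of `ℝ^ι`, where the cell of a point `x`
is the set of points whose coordinates are in the same weak order as those of `x`. -/
def LinOnCells {ι : Type*} [Fintype ι] (f : (ι → ℝ) → ℝ) : Prop :=
  ∀ x : ι → ℝ, ∃ (L : (ι → ℝ) →ₗ[ℝ] ℝ) (c : ℝ),
    ∀ y : ι → ℝ, (∀ i j, y i ≤ y j ↔ x i ≤ x j) → f y = L y + c

private lemma finite_image_of_ord {N : ℕ} {S : Set (Fin N → ℝ)} {F : (Fin N → ℝ) → ℝ}
    (hord : ∀ x ∈ S, ∀ y ∈ S, (∀ i j : Fin N, x i ≤ x j ↔ y i ≤ y j) → F x = F y) :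
    (F '' S).Finite := by
  classical
  set G : (Fin N → Fin N → Bool) → ℝ := fun b =>
    if h : ∃ z, z ∈ S ∧ (fun i j => decide (z i ≤ z j)) = b then F h.choose else 0 with hG
  refine (Set.finite_range G).subset ?_
  rintro _ ⟨x, hx, rfl⟩
  refine ⟨fun i j => decide (x i ≤ x j), ?_⟩
  have h : ∃ z, z ∈ S ∧ (fun i j => decide (z i ≤ z j)) = (fun i j => decide (x i ≤ x j)) :=
    ⟨x, hx, rfl⟩
  show (if h : ∃ z, z ∈ S ∧ (fun i j => decide (z i ≤ z j)) = (fun i j => decide (x i ≤ x j))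
      then F h.choose else 0) = F x
  rw [dif_pos h]
  refine hord _ h.choose_spec.1 _ hx ?_
  intro i j
  have := congrFun (congrFun h.choose_spec.2 i) j
  simpa [decide_eq_decide] using this

private lemma const_of_finite {N : ℕ} {S : Set (Fin N → ℝ)} (hS : IsPreconnected S)
    {F : (Fin N → ℝ) → ℝ} (hF : ContinuousOn F S) (hfin : (F '' S).Finite)
    {x y : Fin N → ℝ} (hx : x ∈ S) (hy : y ∈ S) : F x = F y := by
  rcases lt_trichotomy (F x) (F y) with h | h | h
  · exfalso
    have h1 := hS.intermediate_value hx hy hF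
    exact Set.not_infinite.mpr hfin ((Set.Icc_infinite h).mono h1)
  · exact h
  · exfalso
    have h1 := hS.intermediate_value hy hx hF
    exact Set.not_infinite.mpr hfin ((Set.Icc_infinite h).mono h1)

private lemma coeff_eq {N : ℕ} {f : (Fin N → ℝ) → ℝ} (hfc : Continuous f)
    (hflin : LinOnCells f)
    {S : Set (Fin N → ℝ)} (hconv : Convex ℝ S) {k : Fin N}
    (hne : (univ.erase k).Nonempty)
    (hstrict : ∀ z ∈ S, ∀ j, j ≠ k → z j ≠ z k)
    {x x' : Fin N → ℝ} (hx : x ∈ S) (hx' : x' ∈ S)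
    {L L' : (Fin N → ℝ) →ₗ[ℝ] ℝ} {c c' : ℝ}
    (hL : ∀ y, (∀ i j, y i ≤ y j ↔ x i ≤ x j) → f y = L y + c)
    (hL' : ∀ y, (∀ i j, y i ≤ y j ↔ x' i ≤ x' j) → f y = L' y + c') :
    L (fun m => if m = k then 1 else 0) = L' (fun m => if m = k then 1 else 0) := by
  classical
  set ek : Fin N → ℝ := fun m => if m = k then 1 else 0 with hek
  set γ : (Fin N → ℝ) → ℝ :=
    fun z => ((univ.erase k).inf' hne (fun j => |z j - z k|)) / 2 with hγ
  have hγcont : Continuous γ := by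
    apply Continuous.div_const
    exact Continuous.finset_inf'_apply hne
      (fun j _ => ((continuous_apply j).sub (continuous_apply k)).abs)
  have hγpos : ∀ z ∈ S, 0 < γ z := by
    intro z hz
    rw [hγ]
    apply div_pos _ two_pos
    rw [Finset.lt_inf'_iff]
    intro j hj
    exact abs_pos.mpr (sub_ne_zero.mpr (hstrict z hz j (Finset.ne_of_mem_erase hj)))
  have hgap : ∀ z ∈ S, ∀ j, j ≠ k → 2 * γ z ≤ |z j - z k| := by
    intro z hz j hj
    have := Finset.inf'_le (fun j => |z j - z k|)
      (Finset.mem_erase.mpr ⟨hj, Finset.mem_univ j⟩)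
    rw [hγ]; linarith
  have hsame : ∀ z ∈ S, ∀ i j, (z + γ z • ek) i ≤ (z + γ z • ek) j ↔ z i ≤ z j := by
    intro z hz i j
    have hzp := hγpos z hz
    by_cases hik : i = k <;> by_cases hjk : j = k
    · simp only [Pi.add_apply, hik, hjk, add_le_add_iff_right]
    · have h2 := hgap z hz j hjk
      simp only [Pi.add_apply, Pi.smul_apply, hek, hik, if_pos rfl, if_neg hjk,
        smul_eq_mul, if_true, ite_true, mul_one, mul_zero, add_zero]
      rcases abs_cases (z j - z k) with ⟨he, _⟩ | ⟨he, _⟩ <;> rw [he] at h2 <;>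
        (constructor <;> intro <;> linarith)
    · have h2 := hgap z hz i hik
      simp only [Pi.add_apply, Pi.smul_apply, hek, hjk, if_pos rfl, if_neg hik,
        smul_eq_mul, if_true, ite_true, mul_one, mul_zero, add_zero]
      rcases abs_cases (z i - z k) with ⟨he, _⟩ | ⟨he, _⟩ <;> rw [he] at h2 <;>
        (constructor <;> intro <;> linarith)
    · simp only [Pi.add_apply, Pi.smul_apply, hek, if_neg hik, if_neg hjk,
        smul_eq_mul, mul_zero, add_zero]
  set F : (Fin N → ℝ) → ℝ := fun z => (f (z + γ z • ek) - f z) / γ z with hF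
  have hFval : ∀ z ∈ S, ∀ (M : (Fin N → ℝ) →ₗ[ℝ] ℝ) (d : ℝ),
      (∀ y, (∀ i j, y i ≤ y j ↔ z i ≤ z j) → f y = M y + d) → F z = M ek := by
    intro z hz M d hM
    have h1 : f (z + γ z • ek) = M z + γ z * M ek + d := by
      rw [hM _ (hsame z hz), map_add, map_smul, smul_eq_mul]
    have h2 : f z = M z + d := hM z (fun i j => Iff.rfl)
    show (f (z + γ z • ek) - f z) / γ z = M ek
    rw [h1, h2]
    have h3 : M z + γ z * M ek + d - (M z + d) = γ z * M ek := by ring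
    rw [h3, mul_div_cancel_left₀ _ (hγpos z hz).ne']
  have hord : ∀ z ∈ S, ∀ z' ∈ S, (∀ i j : Fin N, z i ≤ z j ↔ z' i ≤ z' j) → F z = F z' := by
    intro z hz z' hz' hzz'
    obtain ⟨M, d, hM⟩ := hflin z
    rw [hFval z hz M d hM, hFval z' hz' M d
      (fun y hy => hM y (fun i j => (hy i j).trans (hzz' i j).symm))]
  have hFcont : ContinuousOn F S := by
    apply ContinuousOn.div
    · exact ((hfc.comp (continuous_id.add (hγcont.smul continuous_const))).sub hfc).continuousOn
    · exact hγcont.continuousOn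
    · exact fun z hz => (hγpos z hz).ne'
  have := const_of_finite hconv.isPreconnected hFcont (finite_image_of_ord hord) hx hx'
  rw [hFval x hx L c hL, hFval x' hx' L' c' hL'] at this
  exact this


theorem stmt_7 (N : ℕ) (f : (Fin N → ℝ) → ℝ)
    (hfc : Continuous f) (hflin : LinOnCells f)
    (hshift : ∀ (x : Fin N → ℝ) (h : ℝ), f (fun i => x i + h) = f x)
    (π₁ π₂ : Finset (Fin N)) (h₁ : π₁.Nonempty) (h₂ : π₂.Nonempty)
    (hdisj : Disjoint π₁ π₂) (hunion : π₁ ∪ π₂ = Finset.univ) :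
    ∃ (f₁ : (π₁ → ℝ) → ℝ) (f₂ : (π₂ → ℝ) → ℝ),
      Continuous f₁ ∧ LinOnCells f₁ ∧ Continuous f₂ ∧ LinOnCells f₂ ∧
      ∀ x : Fin N → ℝ, (∀ i ∈ π₁, ∀ j ∈ π₂, x j < x i) →
        f x = f₁ (fun i => x i) + f₂ (fun j => x j) := by
  classical
  obtain ⟨i₁, hi₁⟩ := h₁
  obtain ⟨j₂, hj₂⟩ := h₂
  have hmem' : ∀ m : Fin N, m ∈ π₁ → m ∉ π₂ := fun m hm =>
    Finset.disjoint_left.mp hdisj hm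
  have hmem : ∀ m : Fin N, m ∉ π₁ → m ∈ π₂ := by
    intro m hm
    have : m ∈ π₁ ∪ π₂ := hunion ▸ Finset.mem_univ m
    rcases Finset.mem_union.mp this with h | h
    · exact absurd h hm
    · exact h
  have hmem2 : ∀ m : Fin N, m ∈ π₂ → m ∉ π₁ := fun m hm hn => hmem' m hn hm
  have hij : i₁ ≠ j₂ := fun h => hmem' i₁ hi₁ (h ▸ hj₂)
  have hN2 : ∀ k : Fin N, (univ.erase k).Nonempty := by
    intro k
    by_cases h : i₁ = k
    · exact ⟨j₂, Finset.mem_erase.mpr ⟨fun hh => hij (h.trans hh.symm), Finset.mem_univ _⟩⟩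
    · exact ⟨i₁, Finset.mem_erase.mpr ⟨h, Finset.mem_univ _⟩⟩
  have hinst1 : Nonempty {i // i ∈ π₁} := ⟨⟨i₁, hi₁⟩⟩
  have hinst2 : Nonempty {j // j ∈ π₂} := ⟨⟨j₂, hj₂⟩⟩
  have hu1 : (univ : Finset {i // i ∈ π₁}).Nonempty := Finset.univ_nonempty
  have hu2 : (univ : Finset {j // j ∈ π₂}).Nonempty := Finset.univ_nonempty
  set w₁ : Fin N → ℝ := fun m => if m ∈ π₁ then 1 else 0 with hw₁def
  set U : Set (Fin N → ℝ) := {x | ∀ i ∈ π₁, ∀ j ∈ π₂, x j < x i} with hUdef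
  set ι : Fin N → ℝ := fun m => (m : ℝ) with hιdef
  set mn : ({i // i ∈ π₁} → ℝ) → ℝ := fun u => univ.inf' hu1 u with hmndef
  set mx : ({j // j ∈ π₂} → ℝ) → ℝ := fun v => univ.sup' hu2 v with hmxdef
  set ext : ({i // i ∈ π₁} → ℝ) → ({j // j ∈ π₂} → ℝ) → (Fin N → ℝ) :=
    fun u v m => if h : m ∈ π₁ then u ⟨m, h⟩ else v ⟨m, hmem m h⟩ with hextdef
  set a : ℝ := f (w₁ + w₁) - f w₁ with hadef
  set P : ({i // i ∈ π₁} → ℝ) → (Fin N → ℝ) := fun u => ext u (fun _ => mn u - 1) with hPdef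
  set Q : ({j // j ∈ π₂} → ℝ) → (Fin N → ℝ) := fun v => ext (fun _ => mx v + 1) v with hQdef
  set f₁ : ({i // i ∈ π₁} → ℝ) → ℝ := fun u => f (P u) + a * mn u with hf₁def
  set f₂ : ({j // j ∈ π₂} → ℝ) → ℝ := fun v => f (Q v) - a * (mx v + 1) - f w₁ with hf₂def
  -- basic facts
  have hmnle : ∀ (u : {i // i ∈ π₁} → ℝ) (i : {i // i ∈ π₁}), mn u ≤ u i :=
    fun u i => Finset.inf'_le u (Finset.mem_univ i)
  have hmxle : ∀ (v : {j // j ∈ π₂} → ℝ) (j : {j // j ∈ π₂}), v j ≤ mx v :=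
    fun v j => Finset.le_sup' v (Finset.mem_univ j)
  have hmn_eq : ∀ (u : {i // i ∈ π₁} → ℝ) (i₀ : {i // i ∈ π₁}),
      (∀ i, u i₀ ≤ u i) → mn u = u i₀ := fun u i₀ h =>
    le_antisymm (hmnle u i₀) (Finset.le_inf' hu1 u (fun i _ => h i))
  have hmx_eq : ∀ (v : {j // j ∈ π₂} → ℝ) (j₀ : {j // j ∈ π₂}),
      (∀ j, v j ≤ v j₀) → mx v = v j₀ := fun v j₀ h =>
    le_antisymm (Finset.sup'_le hu2 v (fun j _ => h j)) (hmxle v j₀)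
  have hw₁U : w₁ ∈ U := by
    intro i hi j hj
    simp only [hw₁def, if_pos hi, if_neg (hmem2 j hj)]
    norm_num
  have hPU : ∀ u, P u ∈ U := by
    intro u i hi j hj
    show (if h : (j:Fin N) ∈ π₁ then u ⟨j, h⟩ else mn u - 1)
      < (if h : (i:Fin N) ∈ π₁ then u ⟨i, h⟩ else mn u - 1)
    rw [dif_neg (hmem2 j hj), dif_pos hi]
    have := hmnle u ⟨i, hi⟩
    linarith
  have hQU : ∀ v, Q v ∈ U := by
    intro v i hi j hj
    show (if h : (j:Fin N) ∈ π₁ then mx v + 1 else v ⟨j, hmem j h⟩)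
      < (if h : (i:Fin N) ∈ π₁ then mx v + 1 else v ⟨i, hmem i h⟩)
    rw [dif_neg (hmem2 j hj), dif_pos hi]
    have := hmxle v ⟨j, hmem j (hmem2 j hj)⟩
    linarith
  have hUconv : Convex ℝ U := by
    rw [convex_iff_forall_pos]
    intro x hx y hy α β hα hβ hαβ
    intro i hi j hj
    have h1 := hx i hi j hj
    have h2 := hy i hi j hj
    simp only [Pi.add_apply, Pi.smul_apply, smul_eq_mul]
    have := add_lt_add (mul_lt_mul_of_pos_left h1 hα) (mul_lt_mul_of_pos_left h2 hβ)
    linarith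
  have hUmem : ∀ x ∈ U, ∀ i ∈ π₁, ∀ j ∈ π₂, x j < x i := fun x hx => hx
  -- L kills constants
  have hLone : ∀ (x : Fin N → ℝ) (L : (Fin N → ℝ) →ₗ[ℝ] ℝ) (c : ℝ),
      (∀ y, (∀ i j, y i ≤ y j ↔ x i ≤ x j) → f y = L y + c) →
      L (fun _ => (1:ℝ)) = 0 := by
    intro x L c h
    have h1 := h (x + fun _ => (1:ℝ)) (by
      intro i j
      show x i + 1 ≤ x j + 1 ↔ x i ≤ x j
      exact add_le_add_iff_right 1)
    have h2 := h x (fun i j => Iff.rfl)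
    have h3 : f (x + fun _ => (1:ℝ)) = f x := hshift x 1
    rw [map_add] at h1
    rw [h3, h2] at h1
    linarith
  -- order preserved by adding w₁ on U
  have hordw : ∀ z ∈ U, ∀ i j : Fin N, (z + w₁) i ≤ (z + w₁) j ↔ z i ≤ z j := by
    intro z hz i j
    by_cases hi : i ∈ π₁ <;> by_cases hj : j ∈ π₁
    · show z i + w₁ i ≤ z j + w₁ j ↔ _
      rw [hw₁def]
      simp only [if_pos hi, if_pos hj]
      exact add_le_add_iff_right 1
    · have hcross := hz i hi j (hmem j hj)
      show z i + w₁ i ≤ z j + w₁ j ↔ _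
      rw [hw₁def]
      simp only [if_pos hi, if_neg hj]
      constructor <;> intro <;> linarith
    · have hcross := hz j hj i (hmem i hi)
      show z i + w₁ i ≤ z j + w₁ j ↔ _
      rw [hw₁def]
      simp only [if_neg hi, if_pos hj]
      constructor <;> intro <;> linarith
    · show z i + w₁ i ≤ z j + w₁ j ↔ _
      rw [hw₁def]
      simp only [if_neg hi, if_neg hj, add_zero]
  -- slope lemma
  have hslope : ∀ x ∈ U, ∀ (L : (Fin N → ℝ) →ₗ[ℝ] ℝ) (c : ℝ),
      (∀ y, (∀ i j, y i ≤ y j ↔ x i ≤ x j) → f y = L y + c) → L w₁ = a := by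
    have hFcell : ∀ z ∈ U, ∀ (L : (Fin N → ℝ) →ₗ[ℝ] ℝ) (c : ℝ),
        (∀ y, (∀ i j, y i ≤ y j ↔ z i ≤ z j) → f y = L y + c) →
        f (z + w₁) - f z = L w₁ := by
      intro z hz L c hL
      have h1 : f (z + w₁) = L z + L w₁ + c := by
        rw [hL _ (hordw z hz), map_add]
      have h2 : f z = L z + c := hL z (fun i j => Iff.rfl)
      rw [h1, h2]; ring
    have hord : ∀ z ∈ U, ∀ z' ∈ U, (∀ i j : Fin N, z i ≤ z j ↔ z' i ≤ z' j) →
        (fun w => f (w + w₁) - f w) z = (fun w => f (w + w₁) - f w) z' := by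
      intro z hz z' hz' hzz'
      obtain ⟨L, c, hL⟩ := hflin z
      have e1 := hFcell z hz L c hL
      have e2 := hFcell z' hz' L c
        (fun y hy => hL y (fun i j => (hy i j).trans (hzz' i j).symm))
      simp only at e1 e2 ⊢
      rw [e1, e2]
    intro x hx L c hL
    have hFc : ContinuousOn (fun w => f (w + w₁) - f w) U :=
      ((hfc.comp (continuous_id.add continuous_const)).sub hfc).continuousOn
    have := const_of_finite hUconv.isPreconnected hFc (finite_image_of_ord hord) hx hw₁U
    have e1 := hFcell x hx L c hL
    rw [e1] at this
    rw [this, hadef]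
  -- value lemmas
  have hPval1 : ∀ u m (h : m ∈ π₁), P u m = u ⟨m, h⟩ := fun u m h => dif_pos h
  have hPval2 : ∀ u m, m ∉ π₁ → P u m = mn u - 1 := fun u m h => dif_neg h
  have hQval1 : ∀ v m, m ∈ π₁ → Q v m = mx v + 1 := fun v m h => dif_pos h
  have hQval2 : ∀ v m (h : m ∉ π₁), Q v m = v ⟨m, hmem m h⟩ := fun v m h => dif_neg h
  -- continuity
  have hmncont : Continuous mn :=
    Continuous.finset_inf'_apply hu1 (fun i _ => continuous_apply i)
  have hmxcont : Continuous mx :=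
    Continuous.finset_sup'_apply hu2 (fun j _ => continuous_apply j)
  have hPcont : Continuous P := by
    apply continuous_pi
    intro m
    by_cases h : m ∈ π₁
    · simp only [hPdef, hextdef, dif_pos h]
      exact continuous_apply _
    · simp only [hPdef, hextdef, dif_neg h]
      exact hmncont.sub continuous_const
  have hQcont : Continuous Q := by
    apply continuous_pi
    intro m
    by_cases h : m ∈ π₁
    · simp only [hQdef, hextdef, dif_pos h]
      exact hmxcont.add continuous_const
    · simp only [hQdef, hextdef, dif_neg h]
      exact continuous_apply _
  have hf₁cont : Continuous f₁ := (hfc.comp hPcont).add (continuous_const.mul hmncont)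
  have hf₂cont : Continuous f₂ :=
    ((hfc.comp hQcont).sub (continuous_const.mul (hmxcont.add continuous_const))).sub
      continuous_const
  -- order lemmas for P and Q
  have hPord : ∀ (u u' : {i // i ∈ π₁} → ℝ), (∀ i j, u i ≤ u j ↔ u' i ≤ u' j) →
      ∀ m m' : Fin N, P u m ≤ P u m' ↔ P u' m ≤ P u' m' := by
    intro u u' huu' m m'
    by_cases h : m ∈ π₁ <;> by_cases h' : m' ∈ π₁
    · rw [hPval1 u m h, hPval1 u m' h', hPval1 u' m h, hPval1 u' m' h']
      exact huu' ⟨m, h⟩ ⟨m', h'⟩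
    · rw [hPval1 u m h, hPval2 u m' h', hPval1 u' m h, hPval2 u' m' h']
      have k1 := hmnle u ⟨m, h⟩
      have k2 := hmnle u' ⟨m, h⟩
      exact iff_of_false (by push_neg; linarith) (by push_neg; linarith)
    · rw [hPval2 u m h, hPval1 u m' h', hPval2 u' m h, hPval1 u' m' h']
      have k1 := hmnle u ⟨m', h'⟩
      have k2 := hmnle u' ⟨m', h'⟩
      exact iff_of_true (by linarith) (by linarith)
    · rw [hPval2 u m h, hPval2 u m' h', hPval2 u' m h, hPval2 u' m' h']
      exact iff_of_true le_rfl le_rfl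
  have hQord : ∀ (v v' : {j // j ∈ π₂} → ℝ), (∀ i j, v i ≤ v j ↔ v' i ≤ v' j) →
      ∀ m m' : Fin N, Q v m ≤ Q v m' ↔ Q v' m ≤ Q v' m' := by
    intro v v' hvv' m m'
    by_cases h : m ∈ π₁ <;> by_cases h' : m' ∈ π₁
    · rw [hQval1 v m h, hQval1 v m' h', hQval1 v' m h, hQval1 v' m' h']
      exact iff_of_true le_rfl le_rfl
    · rw [hQval1 v m h, hQval2 v m' h', hQval1 v' m h, hQval2 v' m' h']
      have k1 := hmxle v ⟨m', hmem m' h'⟩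
      have k2 := hmxle v' ⟨m', hmem m' h'⟩
      exact iff_of_false (by push_neg; linarith) (by push_neg; linarith)
    · rw [hQval2 v m h, hQval1 v m' h', hQval2 v' m h, hQval1 v' m' h']
      have k1 := hmxle v ⟨m, hmem m h⟩
      have k2 := hmxle v' ⟨m, hmem m h⟩
      exact iff_of_true (by linarith) (by linarith)
    · rw [hQval2 v m h, hQval2 v m' h', hQval2 v' m h, hQval2 v' m' h']
      exact hvv' ⟨m, hmem m h⟩ ⟨m', hmem m' h'⟩
  -- LinOnCells f₁
  have hf₁lin : LinOnCells f₁ := by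
    intro u₀
    obtain ⟨i₀, -, hi₀⟩ := Finset.exists_min_image univ u₀ hu1
    set J : ({i // i ∈ π₁} → ℝ) →ₗ[ℝ] (Fin N → ℝ) :=
      { toFun := fun u m => if h : m ∈ π₁ then u ⟨m, h⟩ else u i₀
        map_add' := by intro u u'; funext m; by_cases h : m ∈ π₁ <;> simp [h]
        map_smul' := by intro r u; funext m; by_cases h : m ∈ π₁ <;> simp [h] } with hJdef
    obtain ⟨L₁, c₁, hL₁⟩ := hflin (P u₀)
    refine ⟨L₁.comp J + a • LinearMap.proj i₀,
      c₁ + L₁ (fun m => if m ∈ π₁ then 0 else (-1 : ℝ)), ?_⟩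
    intro u hu
    have hmnu : mn u = u i₀ := hmn_eq u i₀ (fun i => (hu i₀ i).mpr (hi₀ i (Finset.mem_univ i)))
    have hPu : P u = J u + (fun m => if m ∈ π₁ then 0 else (-1 : ℝ)) := by
      funext m
      show P u m = (if h : m ∈ π₁ then u ⟨m, h⟩ else u i₀) + (if m ∈ π₁ then 0 else (-1 : ℝ))
      by_cases h : m ∈ π₁
      · rw [hPval1 u m h, dif_pos h, if_pos h, add_zero]
      · rw [hPval2 u m h, dif_neg h, if_neg h, hmnu]
        ring
    have h1 : f (P u) = L₁ (P u) + c₁ := hL₁ (P u) (hPord u u₀ hu)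
    show f (P u) + a * mn u = _
    rw [h1, hPu, map_add, hmnu]
    simp only [LinearMap.add_apply, LinearMap.coe_comp, Function.comp_apply,
      LinearMap.smul_apply, LinearMap.proj_apply, smul_eq_mul]
    ring
  -- LinOnCells f₂
  have hf₂lin : LinOnCells f₂ := by
    intro v₀
    obtain ⟨j₀, -, hj₀⟩ := Finset.exists_max_image univ v₀ hu2
    set J' : ({j // j ∈ π₂} → ℝ) →ₗ[ℝ] (Fin N → ℝ) :=
      { toFun := fun v m => if h : m ∈ π₁ then v j₀ else v ⟨m, hmem m h⟩
        map_add' := by intro v v'; funext m; by_cases h : m ∈ π₁ <;> simp [h]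
        map_smul' := by intro r v; funext m; by_cases h : m ∈ π₁ <;> simp [h] } with hJ'def
    obtain ⟨L₂, c₂, hL₂⟩ := hflin (Q v₀)
    refine ⟨L₂.comp J' - a • LinearMap.proj j₀, L₂ w₁ + c₂ - a - f w₁, ?_⟩
    intro v hv
    have hmxv : mx v = v j₀ := hmx_eq v j₀ (fun j => (hv j j₀).mpr (hj₀ j (Finset.mem_univ j)))
    have hQv : Q v = J' v + w₁ := by
      funext m
      show Q v m = (if h : m ∈ π₁ then v j₀ else v ⟨m, hmem m h⟩) + (if m ∈ π₁ then (1:ℝ) else 0)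
      by_cases h : m ∈ π₁
      · rw [hQval1 v m h, dif_pos h, if_pos h, hmxv]
      · rw [hQval2 v m h, dif_neg h, if_neg h, add_zero]
    have h1 : f (Q v) = L₂ (Q v) + c₂ := hL₂ (Q v) (hQord v v₀ hv)
    show f (Q v) - a * (mx v + 1) - f w₁ = _
    rw [h1, hQv, map_add, hmxv]
    simp only [LinearMap.sub_apply, LinearMap.coe_comp, Function.comp_apply,
      LinearMap.smul_apply, LinearMap.proj_apply, smul_eq_mul]
    ring
  -- defect function
  set E : (Fin N → ℝ) → ℝ :=
    fun x => f x - f₁ (fun i => x i) - f₂ (fun j => x j) with hEdef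
  have hEcont : Continuous E :=
    (hfc.sub (hf₁cont.comp (continuous_pi (fun i => continuous_apply (i : Fin N))))).sub
      (hf₂cont.comp (continuous_pi (fun j => continuous_apply (j : Fin N))))
  set U₀ : Set (Fin N → ℝ) := {x | x ∈ U ∧ ∀ i j : Fin N, i ≠ j → x i ≠ x j} with hU₀def
  set ek : Fin N → (Fin N → ℝ) := fun k m => if m = k then 1 else 0 with hekdef
  have hbasis : ∀ (s : Finset (Fin N)) (w : Fin N → ℝ), (∀ m, m ∉ s → w m = 0) →
      w = ∑ k ∈ s, w k • ek k := by
    intro s w hw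
    funext m
    rw [Finset.sum_apply]
    by_cases h : m ∈ s
    · rw [Finset.sum_eq_single m]
      · show w m = w m • ek m m
        simp [hekdef]
      · intro k hk hkm
        show w k • ek k m = 0
        simp [hekdef, Ne.symm hkm]
      · intro hm; exact absurd h hm
    · rw [hw m h, Finset.sum_eq_zero]
      intro k hk
      have hmk : m ≠ k := fun e => h (e ▸ hk)
      show w k • ek k m = 0
      simp [hekdef, hmk]
  have hLsum : ∀ (L : (Fin N → ℝ) →ₗ[ℝ] ℝ) (s : Finset (Fin N)) (w : Fin N → ℝ),
      (∀ m, m ∉ s → w m = 0) → L w = ∑ k ∈ s, w k * L (ek k) := by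
    intro L s w hw
    conv_lhs => rw [hbasis s w hw]
    rw [map_sum]
    exact Finset.sum_congr rfl (fun k _ => by rw [map_smul, smul_eq_mul])
  have hEord : ∀ x ∈ U₀, ∀ y ∈ U₀, (∀ i j : Fin N, x i ≤ x j ↔ y i ≤ y j) → E x = E y := by
    intro x hx₀ y hy₀ hxy
    obtain ⟨hxU, hxd⟩ := hx₀
    obtain ⟨hyU, hyd⟩ := hy₀
    obtain ⟨L, c, hL⟩ := hflin x
    have hfy : f y = L y + c := hL y (fun i j => (hxy i j).symm)
    have hfx : f x = L x + c := hL x (fun i j => Iff.rfl)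
    obtain ⟨i₀, -, hi₀⟩ := Finset.exists_min_image univ (fun i : {i // i ∈ π₁} => x i) hu1
    obtain ⟨j₀, -, hj₀⟩ := Finset.exists_max_image univ (fun j : {j // j ∈ π₂} => x j) hu2
    have hi₀' : ∀ i : {i // i ∈ π₁}, x i₀ ≤ x i := fun i => hi₀ i (Finset.mem_univ i)
    have hj₀' : ∀ j : {j // j ∈ π₂}, x j ≤ x j₀ := fun j => hj₀ j (Finset.mem_univ j)
    set ux : {i // i ∈ π₁} → ℝ := fun i => x i with huxdef
    set uy : {i // i ∈ π₁} → ℝ := fun i => y i with huydef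
    set vx : {j // j ∈ π₂} → ℝ := fun j => x j with hvxdef
    set vy : {j // j ∈ π₂} → ℝ := fun j => y j with hvydef
    have hmnux : mn ux = x i₀ := hmn_eq ux i₀ hi₀'
    have hmnuy : mn uy = y i₀ := hmn_eq uy i₀ (fun i => (hxy i₀ i).mp (hi₀' i))
    have hmxvx : mx vx = x j₀ := hmx_eq vx j₀ hj₀'
    have hmxvy : mx vy = y j₀ := hmx_eq vy j₀ (fun j => (hxy j j₀).mp (hj₀' j))
    obtain ⟨L₁, c₁, hL₁⟩ := hflin (P ux)
    obtain ⟨L₂, c₂, hL₂⟩ := hflin (Q vx)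
    have huxy : ∀ i j : {i // i ∈ π₁}, uy i ≤ uy j ↔ ux i ≤ ux j := fun i j => (hxy i j).symm
    have hvxy : ∀ i j : {j // j ∈ π₂}, vy i ≤ vy j ↔ vx i ≤ vx j := fun i j => (hxy i j).symm
    have hfPx : f (P ux) = L₁ (P ux) + c₁ := hL₁ _ (fun m m' => Iff.rfl)
    have hfPy : f (P uy) = L₁ (P uy) + c₁ := hL₁ _ (hPord uy ux huxy)
    have hfQx : f (Q vx) = L₂ (Q vx) + c₂ := hL₂ _ (fun m m' => Iff.rfl)
    have hfQy : f (Q vy) = L₂ (Q vy) + c₂ := hL₂ _ (hQord vy vx hvxy)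
    have hL₁one : L₁ (fun _ => (1:ℝ)) = 0 := hLone (P ux) L₁ c₁ hL₁
    have hL₁w : L₁ w₁ = a := hslope (P ux) (hPU ux) L₁ c₁ hL₁
    have hL₂w : L₂ w₁ = a := hslope (Q vx) (hQU vx) L₂ c₂ hL₂
    set d1 : Fin N → ℝ := fun m => if m ∈ π₁ then x m - y m else 0 with hd1def
    set d2 : Fin N → ℝ := fun m => if m ∈ π₁ then 0 else x m - y m with hd2def
    have hPdiff : P ux - P uy = d1 + (x i₀ - y i₀) • ((fun _ => (1:ℝ)) - w₁) := by
      funext m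
      show P ux m - P uy m
        = (if m ∈ π₁ then x m - y m else 0)
          + (x i₀ - y i₀) * ((1:ℝ) - (if m ∈ π₁ then (1:ℝ) else 0))
      by_cases h : m ∈ π₁
      · rw [hPval1 ux m h, hPval1 uy m h, if_pos h, if_pos h]
        show x m - y m = x m - y m + (x i₀ - y i₀) * (1 - 1)
        ring
      · rw [hPval2 ux m h, hPval2 uy m h, hmnux, hmnuy, if_neg h, if_neg h]
        ring
    have hQdiff : Q vx - Q vy = d2 + (x j₀ - y j₀) • w₁ := by
      funext m
      show Q vx m - Q vy m
        = (if m ∈ π₁ then 0 else x m - y m) + (x j₀ - y j₀) * (if m ∈ π₁ then (1:ℝ) else 0)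
      by_cases h : m ∈ π₁
      · rw [hQval1 vx m h, hQval1 vy m h, hmxvx, hmxvy, if_pos h, if_pos h]
        ring
      · rw [hQval2 vx m h, hQval2 vy m h, if_neg h, if_neg h]
        show x m - y m = x m - y m + (x j₀ - y j₀) * 0
        ring
    have hf1diff : f₁ ux - f₁ uy = ∑ k ∈ π₁, (x k - y k) * L₁ (ek k) := by
      show (f (P ux) + a * mn ux) - (f (P uy) + a * mn uy) = _
      rw [hfPx, hfPy, hmnux, hmnuy]
      have h0 : L₁ (P ux) - L₁ (P uy) = L₁ (P ux - P uy) := (map_sub L₁ _ _).symm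
      have h1 : L₁ (P ux - P uy)
          = L₁ d1 + (x i₀ - y i₀) * (L₁ (fun _ => (1:ℝ)) - L₁ w₁) := by
        rw [hPdiff, map_add, map_smul, map_sub, smul_eq_mul]
      rw [hL₁one, hL₁w] at h1
      have h2 : L₁ d1 = ∑ k ∈ π₁, (x k - y k) * L₁ (ek k) := by
        rw [hLsum L₁ π₁ d1 (fun m hm => if_neg hm)]
        refine Finset.sum_congr rfl (fun k hk => ?_)
        show (if k ∈ π₁ then x k - y k else 0) * _ = _
        rw [if_pos hk]
      linarith [h0, h1, h2]
    have hf2diff : f₂ vx - f₂ vy = ∑ k ∈ π₂, (x k - y k) * L₂ (ek k) := by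
      show (f (Q vx) - a * (mx vx + 1) - f w₁) - (f (Q vy) - a * (mx vy + 1) - f w₁) = _
      rw [hfQx, hfQy, hmxvx, hmxvy]
      have h0 : L₂ (Q vx) - L₂ (Q vy) = L₂ (Q vx - Q vy) := (map_sub L₂ _ _).symm
      have h1 : L₂ (Q vx - Q vy) = L₂ d2 + (x j₀ - y j₀) * a := by
        rw [hQdiff, map_add, map_smul, smul_eq_mul, hL₂w]
      have hz2 : ∀ m, m ∉ π₂ → d2 m = 0 := by
        intro m hm
        have hm1 : m ∈ π₁ := by
          by_contra hc
          exact hm (hmem m hc)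
        show (if m ∈ π₁ then 0 else x m - y m) = 0
        rw [if_pos hm1]
      have h2 : L₂ d2 = ∑ k ∈ π₂, (x k - y k) * L₂ (ek k) := by
        rw [hLsum L₂ π₂ d2 hz2]
        refine Finset.sum_congr rfl (fun k hk => ?_)
        show (if k ∈ π₁ then 0 else x k - y k) * _ = _
        rw [if_neg (hmem2 k hk)]
      linarith [h0, h1, h2]
    have hfdiff : f x - f y
        = (∑ k ∈ π₁, (x k - y k) * L (ek k)) + ∑ k ∈ π₂, (x k - y k) * L (ek k) := by
      rw [hfx, hfy]
      have h0 : L x + c - (L y + c) = L (x - y) := by rw [map_sub]; ring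
      have h1 : L (x - y) = ∑ k ∈ univ, (x k - y k) * L (ek k) := by
        rw [hLsum L univ (x - y) (fun m hm => absurd (Finset.mem_univ m) hm)]
        exact Finset.sum_congr rfl (fun k _ => rfl)
      rw [h0, h1, ← hunion, Finset.sum_union hdisj]
    have hcoeff1 : ∀ k ∈ π₁, L (ek k) = L₁ (ek k) := by
      intro k hk
      set S : Set (Fin N → ℝ) :=
        {z | ∀ j, j ≠ k → ((x j < x k → z j < z k) ∧ (x k < x j → z k < z j))} with hSdef
      have hSconv : Convex ℝ S := by
        rw [convex_iff_forall_pos]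
        intro p hp q hq α β hα hβ hαβ j hj
        obtain ⟨hp1, hp2⟩ := hp j hj
        obtain ⟨hq1, hq2⟩ := hq j hj
        constructor
        · intro hc
          show α * p j + β * q j < α * p k + β * q k
          exact add_lt_add (mul_lt_mul_of_pos_left (hp1 hc) hα)
            (mul_lt_mul_of_pos_left (hq1 hc) hβ)
        · intro hc
          show α * p k + β * q k < α * p j + β * q j
          exact add_lt_add (mul_lt_mul_of_pos_left (hp2 hc) hα)
            (mul_lt_mul_of_pos_left (hq2 hc) hβ)
      have hSstrict : ∀ z ∈ S, ∀ j, j ≠ k → z j ≠ z k := by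
        intro z hz j hj
        rcases lt_or_gt_of_ne (hxd j k hj) with h | h
        · exact ne_of_lt ((hz j hj).1 h)
        · exact ne_of_gt ((hz j hj).2 h)
      have hxS : x ∈ S := fun j hj => ⟨fun h => h, fun h => h⟩
      have hPxS : P ux ∈ S := by
        intro j hj
        by_cases hjm : j ∈ π₁
        · constructor
          · intro h
            rw [hPval1 ux j hjm, hPval1 ux k hk]
            exact h
          · intro h
            rw [hPval1 ux k hk, hPval1 ux j hjm]
            exact h
        · have hcross : x j < x k := hxU k hk j (hmem j hjm)
          constructor
          · intro h
            rw [hPval2 ux j hjm, hPval1 ux k hk, hmnux]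
            have h3 := hi₀' ⟨k, hk⟩
            show x i₀ - 1 < x k
            exact lt_of_lt_of_le (by linarith) h3
          · intro h
            exact absurd h (not_lt.mpr hcross.le)
      exact coeff_eq hfc hflin hSconv (hN2 k) hSstrict hxS hPxS hL hL₁
    have hcoeff2 : ∀ k ∈ π₂, L (ek k) = L₂ (ek k) := by
      intro k hk
      set S : Set (Fin N → ℝ) :=
        {z | ∀ j, j ≠ k → ((x j < x k → z j < z k) ∧ (x k < x j → z k < z j))} with hSdef
      have hSconv : Convex ℝ S := by
        rw [convex_iff_forall_pos]
        intro p hp q hq α β hα hβ hαβ j hj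
        obtain ⟨hp1, hp2⟩ := hp j hj
        obtain ⟨hq1, hq2⟩ := hq j hj
        constructor
        · intro hc
          show α * p j + β * q j < α * p k + β * q k
          exact add_lt_add (mul_lt_mul_of_pos_left (hp1 hc) hα)
            (mul_lt_mul_of_pos_left (hq1 hc) hβ)
        · intro hc
          show α * p k + β * q k < α * p j + β * q j
          exact add_lt_add (mul_lt_mul_of_pos_left (hp2 hc) hα)
            (mul_lt_mul_of_pos_left (hq2 hc) hβ)
      have hSstrict : ∀ z ∈ S, ∀ j, j ≠ k → z j ≠ z k := by
        intro z hz j hj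
        rcases lt_or_gt_of_ne (hxd j k hj) with h | h
        · exact ne_of_lt ((hz j hj).1 h)
        · exact ne_of_gt ((hz j hj).2 h)
      have hxS : x ∈ S := fun j hj => ⟨fun h => h, fun h => h⟩
      have hk1 : k ∉ π₁ := hmem2 k hk
      have hQxS : Q vx ∈ S := by
        intro j hj
        by_cases hjm : j ∈ π₁
        · have hcross : x k < x j := hxU j hjm k hk
          constructor
          · intro h
            exact absurd h (not_lt.mpr hcross.le)
          · intro h
            rw [hQval2 vx k hk1, hQval1 vx j hjm, hmxvx]
            have h3 := hj₀' ⟨k, hk⟩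
            show x k < x j₀ + 1
            linarith
        · constructor
          · intro h
            rw [hQval2 vx j hjm, hQval2 vx k hk1]
            exact h
          · intro h
            rw [hQval2 vx k hk1, hQval2 vx j hjm]
            exact h
      exact coeff_eq hfc hflin hSconv (hN2 k) hSstrict hxS hQxS hL hL₂
    have hsum1 : (∑ k ∈ π₁, (x k - y k) * L (ek k)) = ∑ k ∈ π₁, (x k - y k) * L₁ (ek k) :=
      Finset.sum_congr rfl (fun k hk => by rw [hcoeff1 k hk])
    have hsum2 : (∑ k ∈ π₂, (x k - y k) * L (ek k)) = ∑ k ∈ π₂, (x k - y k) * L₂ (ek k) :=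
      Finset.sum_congr rfl (fun k hk => by rw [hcoeff2 k hk])
    show f x - f₁ ux - f₂ vx = f y - f₁ uy - f₂ vy
    linarith [hfdiff, hf1diff, hf2diff, hsum1, hsum2]
  have hTfin : (E '' U₀).Finite := finite_image_of_ord hEord
  have hNpos : (0:ℝ) < N := by exact_mod_cast i₁.pos
  have hEU : ∀ x ∈ U, E x ∈ E '' U₀ := by
    intro x hxU
    set Pr : Finset (Fin N × Fin N) :=
      (univ ×ˢ univ).filter (fun p => x p.1 ≠ x p.2) with hPrdef
    have hPrne : Pr.Nonempty := by
      refine ⟨(i₁, j₂), ?_⟩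
      rw [hPrdef, Finset.mem_filter]
      exact ⟨Finset.mem_product.mpr ⟨Finset.mem_univ _, Finset.mem_univ _⟩,
        (hxU i₁ hi₁ j₂ hj₂).ne'⟩
    set g : ℝ := Pr.inf' hPrne (fun p => |x p.1 - x p.2|) with hgdef
    have hgpos : 0 < g := by
      rw [hgdef, Finset.lt_inf'_iff]
      intro p hp
      rw [hPrdef, Finset.mem_filter] at hp
      exact abs_pos.mpr (sub_ne_zero.mpr hp.2)
    have hgle : ∀ i j : Fin N, x i ≠ x j → g ≤ |x i - x j| := by
      intro i j hne
      have hmem3 : (i, j) ∈ Pr := by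
        rw [hPrdef, Finset.mem_filter]
        exact ⟨Finset.mem_product.mpr ⟨Finset.mem_univ _, Finset.mem_univ _⟩, hne⟩
      have h4 := Finset.inf'_le (fun p : Fin N × Fin N => |x p.1 - x p.2|) hmem3
      rw [hgdef]
      exact h4
    set δ₀ : ℝ := g / (2 * N) with hδ₀def
    have hδ₀pos : 0 < δ₀ := div_pos hgpos (by positivity)
    have hι : ∀ m m' : Fin N, m ≠ m' → ι m ≠ ι m' := by
      intro m m' h hc
      have hc' : ((m : ℕ) : ℝ) = ((m' : ℕ) : ℝ) := hc
      have : (m : ℕ) = (m' : ℕ) := by exact_mod_cast hc'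
      exact h (Fin.ext this)
    have hιb : ∀ m m' : Fin N, |ι m - ι m'| < N := by
      intro m m'
      rw [abs_sub_lt_iff]
      have h1 : (m:ℝ) < N := by exact_mod_cast m.isLt
      have h1' : (m':ℝ) < N := by exact_mod_cast m'.isLt
      have h2 : (0:ℝ) ≤ (m' : ℝ) := by positivity
      have h2' : (0:ℝ) ≤ (m : ℝ) := by positivity
      constructor
      · show (m:ℝ) - (m':ℝ) < N
        linarith
      · show (m':ℝ) - (m:ℝ) < N
        linarith
    have hmemδ : ∀ δ : ℝ, 0 < δ → δ < δ₀ → (x + δ • ι) ∈ U₀ := by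
      intro δ hδ hδlt
      have hb : ∀ m m' : Fin N, |δ * (ι m - ι m')| < g / 2 := by
        intro m m'
        rw [abs_mul, abs_of_pos hδ]
        calc δ * |ι m - ι m'| ≤ δ * N :=
              mul_le_mul_of_nonneg_left (hιb m m').le hδ.le
          _ < δ₀ * N := mul_lt_mul_of_pos_right hδlt hNpos
          _ = g / 2 := by rw [hδ₀def]; field_simp
      constructor
      · intro i hi j hj
        have hlt := hxU i hi j hj
        have hgij : g ≤ |x i - x j| := hgle i j hlt.ne'
        rw [abs_of_pos (by linarith : (0:ℝ) < x i - x j)] at hgij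
        have hb2 := abs_lt.mp (hb j i)
        have hmul : δ * (ι j - ι i) = δ * ι j - δ * ι i := by ring
        rw [hmul] at hb2
        show x j + δ * ι j < x i + δ * ι i
        linarith [hb2.1, hb2.2]
      · intro i j hij
        by_cases hc : x i = x j
        · intro hcontra
          have h5 : x i + δ * ι i = x j + δ * ι j := hcontra
          rw [hc] at h5
          have h6 : δ * ι i = δ * ι j := by linarith
          exact hι i j hij (mul_left_cancel₀ hδ.ne' h6)
        · intro hcontra
          have h5 : x i + δ * ι i = x j + δ * ι j := hcontra
          have he : x i - x j = δ * (ι j - ι i) := by ring_nf; linarith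
          have h6 : |x i - x j| < g / 2 := by rw [he]; exact hb j i
          have hgij := hgle i j hc
          linarith
    have hmap : Continuous (fun δ : ℝ => E (x + δ • ι)) :=
      hEcont.comp (continuous_const.add (continuous_id.smul continuous_const))
    have htend : Filter.Tendsto (fun δ : ℝ => E (x + δ • ι))
        (nhdsWithin 0 (Set.Ioi 0)) (nhds (E x)) := by
      have h7 := hmap.tendsto 0
      simp only [zero_smul, add_zero] at h7
      exact h7.mono_left nhdsWithin_le_nhds
    have hev : ∀ᶠ δ in nhdsWithin (0:ℝ) (Set.Ioi 0), E (x + δ • ι) ∈ E '' U₀ := by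
      filter_upwards [Ioo_mem_nhdsGT_of_mem (Set.mem_Ico.mpr ⟨le_refl (0:ℝ), hδ₀pos⟩)] with δ hδ
      exact ⟨x + δ • ι, hmemδ δ hδ.1 hδ.2, rfl⟩
    exact (hTfin.isClosed).mem_of_tendsto htend hev
  have hEUfin : (E '' U).Finite :=
    hTfin.subset (by rintro _ ⟨x, hx, rfl⟩; exact hEU x hx)
  have hEconst : ∀ x ∈ U, E x = E w₁ :=
    fun x hx => const_of_finite hUconv.isPreconnected hEcont.continuousOn hEUfin hx hw₁U
  have hone : (fun i : {i // i ∈ π₁} => w₁ i) = fun _ => (1:ℝ) := by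
    funext i
    show (if (i:Fin N) ∈ π₁ then (1:ℝ) else 0) = 1
    rw [if_pos i.2]
  have hzero : (fun j : {j // j ∈ π₂} => w₁ j) = fun _ => (0:ℝ) := by
    funext j
    show (if (j:Fin N) ∈ π₁ then (1:ℝ) else 0) = 0
    rw [if_neg (hmem2 j j.2)]
  have hmn1 : mn (fun _ => (1:ℝ)) = 1 := Finset.inf'_const _ _
  have hmx0 : mx (fun _ => (0:ℝ)) = 0 := Finset.sup'_const _ _
  have hP1 : P (fun _ => (1:ℝ)) = w₁ := by
    funext m
    by_cases h : m ∈ π₁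
    · rw [hPval1 (fun _ => (1:ℝ)) m h]
      show (1:ℝ) = if m ∈ π₁ then (1:ℝ) else 0
      rw [if_pos h]
    · rw [hPval2 (fun _ => (1:ℝ)) m h, hmn1]
      show 1 - 1 = if m ∈ π₁ then (1:ℝ) else 0
      rw [if_neg h]
      ring
  have hQ0 : Q (fun _ => (0:ℝ)) = w₁ := by
    funext m
    by_cases h : m ∈ π₁
    · rw [hQval1 (fun _ => (0:ℝ)) m h, hmx0]
      show 0 + 1 = if m ∈ π₁ then (1:ℝ) else 0
      rw [if_pos h]
      ring
    · rw [hQval2 (fun _ => (0:ℝ)) m h]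
      show (0:ℝ) = if m ∈ π₁ then (1:ℝ) else 0
      rw [if_neg h]
  have hEw₁ : E w₁ = 0 := by
    show f w₁ - f₁ (fun i => w₁ i) - f₂ (fun j => w₁ j) = 0
    rw [hone, hzero]
    show f w₁ - (f (P fun _ => 1) + a * mn (fun _ => 1))
      - (f (Q fun _ => 0) - a * (mx (fun _ => 0) + 1) - f w₁) = 0
    rw [hP1, hQ0, hmn1, hmx0]
    ring
  refine ⟨f₁, f₂, hf₁cont, hf₁lin, hf₂cont, hf₂lin, ?_⟩
  intro x hx
  have h9 := hEconst x hx
  rw [hEw₁] at h9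
  have h10 : f x - f₁ (fun i => x i) - f₂ (fun j => x j) = 0 := h9
  linarith
end

section
/- Let ψ : ℝ → ℝ be continuous with ψ(0)=1, |ψ(x)| < 1 for x ≠ 0, ψ(x) → 0 as |x| → ∞, and (1 - ψ(x))/x² → a² as x → 0 with a > 0. Let b > 0 and define f_n(z) = 𝟙(c/n² < |z| < c') · (1 + b² n^{-2} - ψ(n z))^{-1}. Then for every ε > 0 there exist c > 0, c' > 0, and n_0 such that ∫_ℝ f_n(z) dz ≤ ε for all n ≥ n_0. -/
set_option maxHeartbeats 1000000

open MeasureTheory Real Filter Topology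

theorem stmt_11 (a b : ℝ) (ha : 0 < a) (hb : 0 < b) (ψ : ℝ → ℝ)
    (hcont : Continuous ψ) (h0 : ψ 0 = 1) (hlt : ∀ x ≠ 0, |ψ x| < 1)
    (hinf : Tendsto ψ (Filter.cocompact ℝ) (𝓝 0))
    (hquad : Tendsto (fun x => (1 - ψ x) / x ^ 2) (𝓝[≠] 0) (𝓝 (a ^ 2))) :
    ∀ ε > (0 : ℝ), ∃ c > (0 : ℝ), ∃ c' > (0 : ℝ), ∃ n₀ : ℕ, ∀ n : ℕ, n₀ ≤ n →
      (∫ z : ℝ, if c / (n : ℝ) ^ 2 < |z| ∧ |z| < c'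
        then (1 + b ^ 2 / (n : ℝ) ^ 2 - ψ (n * z))⁻¹ else 0) ≤ ε := by
  -- ψ ≤ 1 everywhere
  have hψle : ∀ x : ℝ, ψ x ≤ 1 := by
    intro x
    rcases eq_or_ne x 0 with h | h
    · simp [h, h0]
    · exact le_of_lt (abs_lt.mp (hlt x h)).2
  -- quadratic lower bound near 0
  obtain ⟨δ, hδ, hδ2⟩ : ∃ δ > (0:ℝ), ∀ x : ℝ, x ≠ 0 → |x| < δ →
      a ^ 2 / 2 * x ^ 2 ≤ 1 - ψ x := by
    have h1 : ∀ᶠ x in 𝓝[≠] (0:ℝ), a ^ 2 / 2 < (1 - ψ x) / x ^ 2 :=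
      hquad.eventually (eventually_gt_nhds (by nlinarith))
    rw [eventually_nhdsWithin_iff, Metric.eventually_nhds_iff] at h1
    obtain ⟨δ, hδ, h⟩ := h1
    refine ⟨δ, hδ, fun x hx hxδ => ?_⟩
    have h2 := h (by simpa [Real.dist_eq] using hxδ) hx
    have hx2 : (0:ℝ) < x ^ 2 := by positivity
    rw [lt_div_iff₀ hx2] at h2
    linarith
  -- uniform bound away from 0
  obtain ⟨ρ, hρ1, hρ2⟩ : ∃ ρ < (1:ℝ), ∀ x : ℝ, δ ≤ |x| → ψ x ≤ ρ := by
    have h2 : ∀ᶠ x in cocompact ℝ, dist (ψ x) 0 < 1 / 2 :=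
      Metric.tendsto_nhds.mp hinf (1 / 2) (by norm_num)
    rw [Filter.hasBasis_cocompact.eventually_iff] at h2
    obtain ⟨K, hK, hKψ⟩ := h2
    obtain ⟨r, hr⟩ := hK.isBounded.subset_closedBall 0
    set R := max r δ with hR
    set K' := Metric.closedBall (0:ℝ) R \ Metric.ball 0 δ with hK'
    have hK'c : IsCompact K' := (isCompact_closedBall 0 R).diff Metric.isOpen_ball
    have hne : K'.Nonempty := by
      refine ⟨δ, ?_, ?_⟩
      · simp [Real.dist_eq, abs_of_pos hδ, le_max_right r δ]; exact le_max_right r δ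
      · simp [Real.dist_eq, abs_of_pos hδ]
    obtain ⟨x₀, hx₀K, hx₀max⟩ := hK'c.exists_isMaxOn hne hcont.continuousOn
    have hx₀δ : δ ≤ |x₀| := by
      have := hx₀K.2
      simpa [Real.dist_eq, not_lt] using this
    have hx₀ne : x₀ ≠ 0 := by
      intro h; rw [h] at hx₀δ; simp at hx₀δ; linarith
    refine ⟨max (ψ x₀) (1 / 2), max_lt (abs_lt.mp (hlt x₀ hx₀ne)).2 (by norm_num), ?_⟩
    intro x hx
    by_cases hxR : |x| ≤ R
    · refine le_max_of_le_left (hx₀max ⟨?_, ?_⟩)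
      · simpa [Real.dist_eq] using hxR
      · simp [Real.dist_eq, not_lt]; exact hx
    · have hxK : x ∉ K := by
        intro hxmem
        exact hxR (le_trans (by simpa [Real.dist_eq] using hr hxmem) (le_max_left r δ))
      have := hKψ hxK
      rw [Real.dist_0_eq_abs] at this
      exact le_max_of_le_right (le_of_lt (abs_lt.mp this).2)
  have hρ0 : (0:ℝ) < 1 - ρ := by linarith
  set M : ℝ := (1 - ρ)⁻¹ with hMdef
  have hM : 0 < M := inv_pos.mpr hρ0
  intro ε hε
  set c : ℝ := 8 / (a ^ 2 * ε) with hc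
  have hc0 : 0 < c := by positivity
  set c' : ℝ := ε / (4 * M) with hc'
  have hc'0 : 0 < c' := by positivity
  refine ⟨c, hc0, c', hc'0, ⌈c / δ⌉₊ + 1, fun n hn => ?_⟩
  have hn1 : 1 ≤ n := le_trans (Nat.le_add_left 1 _) hn
  set N : ℝ := (n : ℝ) with hNdef
  have hN1 : (1:ℝ) ≤ N := by rw [hNdef]; exact_mod_cast hn1
  have hN0 : (0:ℝ) < N := by linarith
  have hNδ : c < N * δ := by
    have h1 : c / δ < N := by
      have : c / δ ≤ (⌈c / δ⌉₊ : ℝ) := Nat.le_ceil _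
      have h2 : ((⌈c / δ⌉₊ : ℕ) : ℝ) < N := by
        rw [hNdef]; exact_mod_cast Nat.lt_of_lt_of_le (Nat.lt_succ_self _) hn
      linarith
    calc c = c / δ * δ := by field_simp
    _ < N * δ := by exact mul_lt_mul_of_pos_right h1 hδ
  set t : ℝ := c / N ^ 2 with htdef
  set s : ℝ := δ / N with hsdef
  have ht0 : 0 < t := by positivity
  have hs0 : 0 < s := by positivity
  have hts : t < s := by
    rw [htdef, hsdef, div_lt_div_iff₀ (by positivity) hN0]
    nlinarith
  set C : ℝ := 2 / (a ^ 2 * N ^ 2) with hC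
  have hC0 : 0 < C := by positivity
  set S : Set ℝ := Set.Ioo (-s) (-t) ∪ Set.Ioo t s with hS
  have hSmem : ∀ z : ℝ, z ∈ S ↔ t < |z| ∧ |z| < s := by
    intro z
    simp only [hS, Set.mem_union, Set.mem_Ioo, lt_abs, abs_lt]
    constructor
    · rintro (⟨h1, h2⟩ | ⟨h1, h2⟩) <;> constructor
      · right; linarith
      · constructor <;> linarith
      · left; exact h1
      · constructor <;> linarith
    · rintro ⟨h1 | h1, h2, h3⟩
      · right; exact ⟨h1, h3⟩
      · left; exact ⟨h2, by linarith⟩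
  set g₁ : ℝ → ℝ := S.indicator (fun z => C * (z ^ 2)⁻¹) with hg₁
  set g₂ : ℝ → ℝ := (Set.Ioo (-c') c').indicator (fun _ => M) with hg₂
  -- integrability
  have hIntS : IntegrableOn (fun z : ℝ => C * (z ^ 2)⁻¹) S := by
    rw [hS]
    refine IntegrableOn.union ?_ ?_
    · have hco : ContinuousOn (fun z : ℝ => C * (z ^ 2)⁻¹) (Set.Icc (-s) (-t)) := by
        refine continuousOn_const.mul ((continuousOn_id.pow 2).inv₀ ?_)
        intro x hx
        have : x < 0 := lt_of_le_of_lt hx.2 (by linarith)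
        exact pow_ne_zero 2 this.ne
      exact hco.integrableOn_Icc.mono_set Set.Ioo_subset_Icc_self
    · have hco : ContinuousOn (fun z : ℝ => C * (z ^ 2)⁻¹) (Set.Icc t s) := by
        refine continuousOn_const.mul ((continuousOn_id.pow 2).inv₀ ?_)
        intro x hx
        have : 0 < x := lt_of_lt_of_le ht0 hx.1
        exact pow_ne_zero 2 this.ne'
      exact hco.integrableOn_Icc.mono_set Set.Ioo_subset_Icc_self
  have hSmeas : MeasurableSet S := (measurableSet_Ioo).union measurableSet_Ioo
  have hg₁int : Integrable g₁ := (integrable_indicator_iff hSmeas).mpr hIntS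
  have hg₂int : Integrable g₂ :=
    (integrable_indicator_iff measurableSet_Ioo).mpr
      ((integrableOn_const_iff).mpr (Or.inr measure_Ioo_lt_top))
  have hgint : Integrable (fun z => g₁ z + g₂ z) := hg₁int.add hg₂int
  -- pointwise bound
  have hpt : ∀ z : ℝ,
      (if t < |z| ∧ |z| < c' then (1 + b ^ 2 / N ^ 2 - ψ (N * z))⁻¹ else 0) ≤ g₁ z + g₂ z := by
    intro z
    have hg₁nn : 0 ≤ g₁ z := Set.indicator_nonneg (fun y _ => by positivity) z
    have hg₂nn : 0 ≤ g₂ z := Set.indicator_nonneg (fun y _ => hM.le) z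
    by_cases hcond : t < |z| ∧ |z| < c'
    · rw [if_pos hcond]
      obtain ⟨h1, h2⟩ := hcond
      have hz0 : z ≠ 0 := by
        intro h; rw [h] at h1; simp at h1; linarith
      have hNz0 : N * z ≠ 0 := mul_ne_zero hN0.ne' hz0
      by_cases hzs : |z| < s
      · -- quadratic regime
        have hNzδ : |N * z| < δ := by
          rw [abs_mul, abs_of_pos hN0]
          calc N * |z| < N * s := by exact mul_lt_mul_of_pos_left hzs hN0
          _ = δ := by rw [hsdef]; field_simp
        have hkey := hδ2 (N * z) hNz0 hNzδ
        have hden : a ^ 2 / 2 * (N * z) ^ 2 ≤ 1 + b ^ 2 / N ^ 2 - ψ (N * z) := by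
          have : 0 ≤ b ^ 2 / N ^ 2 := by positivity
          linarith
        have hdpos : 0 < a ^ 2 / 2 * (N * z) ^ 2 := by
          have h' : 0 < (N * z) ^ 2 := by
            rw [← sq_abs]; exact pow_pos (abs_pos.mpr hNz0) 2
          have h'' : (0:ℝ) < a ^ 2 / 2 := by positivity
          exact mul_pos h'' h'
        have hb1 : (1 + b ^ 2 / N ^ 2 - ψ (N * z))⁻¹ ≤ (a ^ 2 / 2 * (N * z) ^ 2)⁻¹ :=
          inv_anti₀ hdpos hden
        have hb2 : (a ^ 2 / 2 * (N * z) ^ 2)⁻¹ = C * (z ^ 2)⁻¹ := by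
          rw [hC]
          have hz2 : z ^ 2 ≠ 0 := pow_ne_zero 2 hz0
          field_simp
        have hzS : z ∈ S := (hSmem z).mpr ⟨h1, hzs⟩
        have : g₁ z = C * (z ^ 2)⁻¹ := Set.indicator_of_mem hzS _
        linarith [hb1.trans_eq hb2]
      · -- bounded regime
        have hNzδ : δ ≤ |N * z| := by
          rw [abs_mul, abs_of_pos hN0]
          push_neg at hzs
          calc δ = N * s := by rw [hsdef]; field_simp
          _ ≤ N * |z| := by exact mul_le_mul_of_nonneg_left hzs hN0.le
        have hψρ := hρ2 (N * z) hNzδ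
        have hden : 1 - ρ ≤ 1 + b ^ 2 / N ^ 2 - ψ (N * z) := by
          have : 0 ≤ b ^ 2 / N ^ 2 := by positivity
          linarith
        have hb1 : (1 + b ^ 2 / N ^ 2 - ψ (N * z))⁻¹ ≤ M := inv_anti₀ hρ0 hden
        have hzc' : z ∈ Set.Ioo (-c') c' := by
          rw [Set.mem_Ioo, ← abs_lt]; exact h2
        have : g₂ z = M := Set.indicator_of_mem hzc' _
        linarith
    · rw [if_neg hcond]; linarith
  -- nonnegativity
  have hnn : ∀ z : ℝ,
      0 ≤ (if t < |z| ∧ |z| < c' then (1 + b ^ 2 / N ^ 2 - ψ (N * z))⁻¹ else 0) := by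
    intro z
    by_cases hcond : t < |z| ∧ |z| < c'
    · rw [if_pos hcond]
      have : 0 < 1 + b ^ 2 / N ^ 2 - ψ (N * z) := by
        have h1 := hψle (N * z)
        have : 0 < b ^ 2 / N ^ 2 := by positivity
        linarith
      positivity
    · rw [if_neg hcond]
  -- main integral comparison
  have hmono : (∫ z : ℝ, if t < |z| ∧ |z| < c'
      then (1 + b ^ 2 / N ^ 2 - ψ (N * z))⁻¹ else 0) ≤ ∫ z : ℝ, (g₁ z + g₂ z) :=
    integral_mono_of_nonneg (Filter.Eventually.of_forall hnn) hgint
      (Filter.Eventually.of_forall hpt)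
  -- compute ∫ g₁
  have hI1 : ∫ z : ℝ, g₁ z ≤ 2 * C * t⁻¹ := by
    rw [hg₁, integral_indicator hSmeas, hS,
      setIntegral_union (by
        rw [Set.disjoint_left]
        rintro z ⟨_, hz2⟩ ⟨hz3, _⟩
        linarith) measurableSet_Ioo
        (hIntS.mono_set (by rw [hS]; exact Set.subset_union_left))
        (hIntS.mono_set (by rw [hS]; exact Set.subset_union_right))]
    have hzpow : ∀ x : ℝ, (x ^ 2)⁻¹ = x ^ (-2 : ℤ) := by
      intro x; simp [zpow_neg]
    have hIoo : ∀ u v : ℝ, u < v → (0:ℝ) ∉ Set.uIcc u v →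
        ∫ z in Set.Ioo u v, C * (z ^ 2)⁻¹ = C * (u⁻¹ - v⁻¹) := by
      intro u v huv h0uv
      rw [← integral_Ioc_eq_integral_Ioo, ← intervalIntegral.integral_of_le huv.le,
        intervalIntegral.integral_const_mul]
      congr 1
      simp_rw [hzpow]
      rw [integral_zpow (Or.inr ⟨by norm_num, h0uv⟩)]
      norm_num
      ring
    rw [hIoo (-s) (-t) (by linarith) (by
        simp [Set.mem_uIcc]
        constructor <;> intro h <;> linarith),
      hIoo t s hts (by
        simp [Set.mem_uIcc]
        constructor <;> intro h <;> linarith)]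
    have h1 : (-s)⁻¹ - (-t)⁻¹ = t⁻¹ - s⁻¹ := by
      rw [inv_neg, inv_neg]; ring
    rw [h1]
    have hsi : 0 < s⁻¹ := inv_pos.mpr hs0
    nlinarith
  -- compute ∫ g₂
  have hI2 : ∫ z : ℝ, g₂ z = M * (2 * c') := by
    rw [hg₂, integral_indicator measurableSet_Ioo, setIntegral_const, measureReal_def,
      Real.volume_Ioo]
    rw [ENNReal.toReal_ofReal (by linarith)]
    simp only [smul_eq_mul]
    ring
  have hsum : ∫ z : ℝ, (g₁ z + g₂ z) = (∫ z : ℝ, g₁ z) + ∫ z : ℝ, g₂ z :=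
    integral_add hg₁int hg₂int
  -- final numeric estimate
  have hfin : (∫ z : ℝ, g₁ z) + (∫ z : ℝ, g₂ z) ≤ ε := by
    have h1 : 2 * C * t⁻¹ = ε / 2 := by
      rw [hC, htdef, hc]
      field_simp
      ring
    have h2 : M * (2 * c') = ε / 2 := by
      rw [hc']
      field_simp
      ring
    rw [hI2, h2]
    linarith [hI1, h1 ▸ hI1]
  calc (∫ z : ℝ, if c / (n : ℝ) ^ 2 < |z| ∧ |z| < c'
        then (1 + b ^ 2 / (n : ℝ) ^ 2 - ψ (n * z))⁻¹ else 0)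
      ≤ ∫ z : ℝ, (g₁ z + g₂ z) := hmono
    _ = (∫ z : ℝ, g₁ z) + ∫ z : ℝ, g₂ z := hsum
    _ ≤ ε := hfin
end

section
/- Let f : ℝ^N → ℝ be continuous, positively homogeneous of degree 1 (f(λx) = λ f(x) for λ ≥ 0), and linear on each cell of ℝ^N. Then there exists c > 0 such that g(x) = c Σ_{i<j} |x_i − x_j| + f(x) is a convex function on ℝ^N, provided f is shift-invariant (f(x+h𝟏) = f(x)). -/
namespace S15
open Finset Topology Filter
variable {N : ℕ}

/-- sign of z i - z j -/
noncomputable def sgn (z : Fin N → ℝ) (i j : Fin N) : ℝ :=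
  if z j < z i then 1 else if z i < z j then -1 else 0

noncomputable def SS (x : Fin N → ℝ) : ℝ :=
  ∑ p ∈ Finset.univ.filter (fun p : Fin N × Fin N => p.1 < p.2), |x p.1 - x p.2|

noncomputable def Sz (z x : Fin N → ℝ) : ℝ :=
  ∑ p ∈ Finset.univ.filter (fun p : Fin N × Fin N => p.1 < p.2), sgn z p.1 p.2 * (x p.1 - x p.2)

lemma Sz_le_SS (z x : Fin N → ℝ) : Sz z x ≤ SS x := by
  apply Finset.sum_le_sum
  intro p _
  have h1 : sgn z p.1 p.2 * (x p.1 - x p.2) ≤ |sgn z p.1 p.2| * |x p.1 - x p.2| := by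
    calc sgn z p.1 p.2 * (x p.1 - x p.2) ≤ |sgn z p.1 p.2 * (x p.1 - x p.2)| := le_abs_self _
    _ = |sgn z p.1 p.2| * |x p.1 - x p.2| := abs_mul _ _
  have h2 : |sgn z p.1 p.2| ≤ 1 := by unfold sgn; split_ifs <;> simp
  nlinarith [abs_nonneg (x p.1 - x p.2), abs_nonneg (sgn z p.1 p.2)]

lemma Sz_comb (z x y : Fin N → ℝ) (a b : ℝ) :
    Sz z (fun i => a * x i + b * y i) = a * Sz z x + b * Sz z y := by
  unfold Sz
  rw [Finset.mul_sum, Finset.mul_sum, ← Finset.sum_add_distrib]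
  exact Finset.sum_congr rfl (fun p _ => by ring)

lemma Sz_sub (z x y : Fin N → ℝ) : Sz z (fun i => x i - y i) = Sz z x - Sz z y := by
  have := Sz_comb z x y 1 (-1)
  simp only [one_mul, neg_one_mul] at this
  rw [show (fun i => x i - y i) = (fun i => 1 * x i + -1 * y i) by funext i; ring]
  rw [Sz_comb]; ring

/-- if per-pair signs agree, Sz equals SS -/
lemma SS_eq_Sz (z x : Fin N → ℝ)
    (h : ∀ i j, sgn z i j * (x i - x j) = |x i - x j|) : SS x = Sz z x :=
  Finset.sum_congr rfl (fun p _ => (h p.1 p.2).symm)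

lemma Sz_self (x : Fin N → ℝ) : SS x = Sz x x := by
  apply SS_eq_Sz
  intro i j
  unfold sgn
  rcases lt_trichotomy (x i) (x j) with h | h | h
  · rw [if_neg (by linarith), if_pos h, abs_of_neg (by linarith)]; ring
  · rw [if_neg (by linarith), if_neg (by linarith), h]; simp
  · rw [if_pos h, abs_of_pos (by linarith)]; ring

noncomputable def patB (x : Fin N → ℝ) : Fin N → Fin N → Bool := fun i j => decide (x i ≤ x j)

def okL (f : (Fin N → ℝ) → ℝ) (r : Fin N → Fin N → Bool) (L : (Fin N → ℝ) →ₗ[ℝ] ℝ) : Prop :=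
  ∀ y : Fin N → ℝ, (∀ i j, (y i ≤ y j ↔ r i j = true)) → f y = L y

open Classical in
noncomputable def Lr (f : (Fin N → ℝ) → ℝ) (r : Fin N → Fin N → Bool) : (Fin N → ℝ) →ₗ[ℝ] ℝ :=
  if h : ∃ L, okL f r L then h.choose else 0

lemma Lr_spec {f : (Fin N → ℝ) → ℝ} {r : Fin N → Fin N → Bool} (h : ∃ L, okL f r L) :
    okL f r (Lr f r) := by
  rw [Lr, dif_pos h]; exact h.choose_spec

lemma exists_okL {f : (Fin N → ℝ) → ℝ} (hflin : LinOnCells f)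
    (hhom : ∀ (lam : ℝ) (x : Fin N → ℝ), 0 ≤ lam → f (fun i => lam * x i) = lam * f x)
    (x : Fin N → ℝ) : ∃ L, okL f (patB x) L := by
  obtain ⟨L, c0, hL⟩ := hflin x
  have hx : f x = L x + c0 := hL x (fun i j => Iff.rfl)
  have h2cell : ∀ i j, (fun i => 2 * x i) i ≤ (fun i => 2 * x i) j ↔ x i ≤ x j := by
    intro i j; simp only; constructor <;> intro <;> linarith
  have h2 : f (fun i => 2 * x i) = L (fun i => 2 * x i) + c0 := hL _ h2cell
  have hL2 : L (fun i => 2 * x i) = 2 * L x := by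
    have h : (fun i => 2 * x i) = (2:ℝ) • x := by funext i; simp [smul_eq_mul]
    rw [h, map_smul]; simp
  have hc0 : c0 = 0 := by
    have := hhom 2 x (by norm_num)
    rw [h2, hL2, hx] at this; linarith
  refine ⟨L, fun y hy => ?_⟩
  have := hL y (fun i j => (hy i j).trans (by simp [patB]))
  rw [this, hc0, add_zero]

/-- coefficient-sum bound for a linear functional -/
noncomputable def CL (L : (Fin N → ℝ) →ₗ[ℝ] ℝ) : ℝ :=
  ∑ i, |L (fun j => if i = j then (1:ℝ) else 0)|

lemma CL_nonneg (L : (Fin N → ℝ) →ₗ[ℝ] ℝ) : 0 ≤ CL L :=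
  Finset.sum_nonneg (fun i _ => abs_nonneg _)

lemma L_bound (L : (Fin N → ℝ) →ₗ[ℝ] ℝ) (v : Fin N → ℝ) (M : ℝ)
    (hM : ∀ i, |v i| ≤ M) : |L v| ≤ CL L * M := by
  rw [LinearMap.pi_apply_eq_sum_univ L v, CL, Finset.sum_mul]
  calc |∑ i, v i • L fun j => if i = j then (1:ℝ) else 0|
      ≤ ∑ i, |v i • L fun j => if i = j then (1:ℝ) else 0| := Finset.abs_sum_le_sum_abs _ _
    _ ≤ ∑ i, |L fun j => if i = j then (1:ℝ) else 0| * M := by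
        apply Finset.sum_le_sum; intro i _
        rw [smul_eq_mul, abs_mul, mul_comm]
        have := abs_nonneg (L fun j => if i = j then (1:ℝ) else 0)
        have := hM i
        have := abs_nonneg (v i)
        nlinarith

noncomputable def CC (f : (Fin N → ℝ) → ℝ) : ℝ :=
  ∑ r : Fin N → Fin N → Bool, CL (Lr f r)

lemma CC_nonneg (f : (Fin N → ℝ) → ℝ) : 0 ≤ CC f :=
  Finset.sum_nonneg (fun r _ => CL_nonneg _)

lemma CL_le_CC (f : (Fin N → ℝ) → ℝ) (r : Fin N → Fin N → Bool) : CL (Lr f r) ≤ CC f :=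
  Finset.single_le_sum (fun r _ => CL_nonneg (Lr f r)) (Finset.mem_univ r)

lemma cont_limit {f : (Fin N → ℝ) → ℝ} (hfc : Continuous f) (L : (Fin N → ℝ) →ₗ[ℝ] ℝ)
    (a b : Fin N → ℝ) (ε : ℝ) (hε : 0 < ε)
    (h : ∀ t : ℝ, 0 < t → t < ε → f (fun i => a i + t * b i) = L (fun i => a i + t * b i)) :
    f a = L a := by
  set γ : ℝ → (Fin N → ℝ) := fun t => fun i => a i + t * b i with hγdef
  have hγ : Continuous γ := by
    apply continuous_pi; intro i
    exact continuous_const.add ((continuous_id.mul continuous_const))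
  have hγ0 : γ 0 = a := by funext i; simp [γ]
  have htend : Tendsto γ (𝓝[>] (0:ℝ)) (𝓝 a) := by
    rw [← hγ0]
    exact (hγ.tendsto 0).mono_left nhdsWithin_le_nhds
  have h1 : Tendsto (f ∘ γ) (𝓝[>] (0:ℝ)) (𝓝 (f a)) := (hfc.tendsto a).comp htend
  have h2 : Tendsto ((L : (Fin N → ℝ) → ℝ) ∘ γ) (𝓝[>] (0:ℝ)) (𝓝 (L a)) :=
    ((L.continuous_of_finiteDimensional).tendsto a).comp htend
  have he : f ∘ γ =ᶠ[𝓝[>] (0:ℝ)] (L : (Fin N → ℝ) → ℝ) ∘ γ := by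
    filter_upwards [Ioo_mem_nhdsGT_of_mem (Set.mem_Ico.mpr ⟨le_refl 0, hε⟩)] with t ht
    exact h t ht.1 ht.2
  exact tendsto_nhds_unique (h1.congr' he) h2




variable {N : ℕ}

noncomputable def Viol (z x : Fin N → ℝ) : Finset (Fin N × Fin N) :=
  Finset.univ.filter (fun p => z p.1 ≤ z p.2 ∧ x p.2 < x p.1)

lemma mem_Viol {z x : Fin N → ℝ} {p : Fin N × Fin N} :
    p ∈ Viol z x ↔ z p.1 ≤ z p.2 ∧ x p.2 < x p.1 := by
  simp [Viol]

noncomputable def proj (z x : Fin N → ℝ) (i : Fin N) : ℝ :=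
  (Finset.univ.filter (fun j => z j ≤ z i)).sup'
    ⟨i, Finset.mem_filter.mpr ⟨Finset.mem_univ i, le_refl (z i)⟩⟩ x

lemma proj_ge (z x : Fin N → ℝ) (i : Fin N) : x i ≤ proj z x i :=
  Finset.le_sup' x (Finset.mem_filter.mpr ⟨Finset.mem_univ i, le_refl (z i)⟩)

lemma proj_ge' (z x : Fin N → ℝ) {i j : Fin N} (h : z j ≤ z i) : x j ≤ proj z x i :=
  Finset.le_sup' x (Finset.mem_filter.mpr ⟨Finset.mem_univ j, h⟩)

lemma proj_mono (z x : Fin N → ℝ) {i j : Fin N} (h : z i ≤ z j) :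
    proj z x i ≤ proj z x j := by
  apply Finset.sup'_le
  intro k hk
  exact proj_ge' z x (le_trans (Finset.mem_filter.mp hk).2 h)

lemma proj_exists (z x : Fin N → ℝ) (i : Fin N) :
    ∃ j, z j ≤ z i ∧ proj z x i = x j := by
  obtain ⟨j, hj, hje⟩ := Finset.exists_mem_eq_sup'
    (⟨i, Finset.mem_filter.mpr ⟨Finset.mem_univ i, le_refl (z i)⟩⟩ :
      (Finset.univ.filter (fun j => z j ≤ z i)).Nonempty) x
  exact ⟨j, (Finset.mem_filter.mp hj).2, hje⟩



lemma key0 {f : (Fin N → ℝ) → ℝ} (hfc : Continuous f) (hflin : LinOnCells f)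
    (hhom : ∀ (lam : ℝ) (x : Fin N → ℝ), 0 ≤ lam → f (fun i => lam * x i) = lam * f x)
    (z x : Fin N → ℝ) (hv : ∀ i j, z i ≤ z j → x i ≤ x j) :
    f x = Lr f (patB z) x := by
  apply cont_limit hfc (Lr f (patB z)) x (fun i => z i - x i) 1 one_pos
  intro t ht0 ht1
  apply Lr_spec (exists_okL hflin hhom z)
  intro i j
  simp only [patB, decide_eq_true_eq]
  constructor
  · intro hy
    by_contra hz
    push_neg at hz
    have hx : x j ≤ x i := hv j i hz.le
    have : (x j + t * (z j - x j)) < (x i + t * (z i - x i)) := by nlinarith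
    linarith
  · intro hz
    have hx : x i ≤ x j := hv i j hz
    by_cases hzz : z j ≤ z i
    · have hx2 : x j ≤ x i := hv j i hzz
      have hxe : x i = x j := le_antisymm hx hx2
      have hze : z i = z j := le_antisymm hz hzz
      simp [hxe, hze]
    · push_neg at hzz
      nlinarith


lemma key_of_empty {f : (Fin N → ℝ) → ℝ} (hfc : Continuous f) (hflin : LinOnCells f)
    (hhom : ∀ (lam : ℝ) (x : Fin N → ℝ), 0 ≤ lam → f (fun i => lam * x i) = lam * f x)
    (z x : Fin N → ℝ) (hcard : (Viol z x).card = 0) :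
    Lr f (patB z) x - f x ≤ (2 * CC f + 1) * (SS x - Sz z x) := by
  have hemp : Viol z x = ∅ := Finset.card_eq_zero.mp hcard
  have hv : ∀ i j, z i ≤ z j → x i ≤ x j := by
    intro i j hz
    by_contra hx
    push_neg at hx
    have hm : (i, j) ∈ Viol z x := mem_Viol.mpr ⟨hz, hx⟩
    rw [hemp] at hm
    exact absurd hm (Finset.notMem_empty _)
  rw [← key0 hfc hflin hhom z x hv]
  have h1 := Sz_le_SS z x
  have h2 := CC_nonneg f
  nlinarith

set_option maxHeartbeats 3000000 in
lemma key {f : (Fin N → ℝ) → ℝ} (hfc : Continuous f) (hflin : LinOnCells f)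
    (hhom : ∀ (lam : ℝ) (x : Fin N → ℝ), 0 ≤ lam → f (fun i => lam * x i) = lam * f x) :
    ∀ (n : ℕ) (z x : Fin N → ℝ), (Viol z x).card ≤ n →
      Lr f (patB z) x - f x ≤ (2 * CC f + 1) * (SS x - Sz z x) := by
  intro n
  induction n with
  | zero =>
    intro z x hcard
    exact key_of_empty hfc hflin hhom z x (Nat.le_zero.mp hcard)
  | succ n ih =>
    intro z x hcard
    by_cases h0 : (Viol z x).card = 0
    · exact key_of_empty hfc hflin hhom z x h0
    have hne : (Viol z x).Nonempty := Finset.card_pos.mp (Nat.pos_of_ne_zero h0)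
    set p := proj z x with hp
    have hpge : ∀ i, x i ≤ p i := proj_ge z x
    have hpmono : ∀ i j, z i ≤ z j → p i ≤ p j := fun i j h => proj_mono z x h
    set T : Fin N × Fin N → ℝ :=
      fun q => (x q.1 - x q.2) / ((x q.1 - x q.2) - (p q.1 - p q.2)) with hTdef
    obtain ⟨qm, hqmm, hqme⟩ := Finset.exists_mem_eq_inf' hne T
    set ts := (Viol z x).inf' hne T with hts
    have hTfact : ∀ q ∈ Viol z x, 0 < T q ∧ T q ≤ 1 ∧
        T q * ((x q.1 - x q.2) - (p q.1 - p q.2)) = x q.1 - x q.2 := by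
      intro q hq
      obtain ⟨hz12, hx21⟩ := mem_Viol.mp hq
      have hd0 : 0 < x q.1 - x q.2 := by linarith
      have hd1 : p q.1 - p q.2 ≤ 0 := by have := hpmono _ _ hz12; linarith
      have hden : 0 < (x q.1 - x q.2) - (p q.1 - p q.2) := by linarith
      refine ⟨?_, ?_, ?_⟩
      · simp only [hTdef]
        exact div_pos hd0 hden
      · simp only [hTdef]
        rw [div_le_one hden]; linarith
      · simp only [hTdef]
        field_simp
    have hts0 : 0 < ts := by
      rw [hts, Finset.lt_inf'_iff]
      exact fun q hq => (hTfact q hq).1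
    have hts1 : ts ≤ 1 := by
      rw [hqme]; exact (hTfact qm hqmm).2.1
    have htsle : ∀ q ∈ Viol z x, ts ≤ T q := fun q hq => Finset.inf'_le T hq
    have htv : ∀ i j, z i ≤ z j → x j < x i →
        ts * ((x i - x j) - (p i - p j)) ≤ x i - x j := by
      intro i j hz hx
      have hq : ((i, j) : Fin N × Fin N) ∈ Viol z x := mem_Viol.mpr ⟨hz, hx⟩
      have h1 := htsle _ hq
      have h2 := (hTfact _ hq).2.2
      have hd1 : p i - p j ≤ 0 := by have := hpmono _ _ hz; linarith
      have hden : 0 < (x i - x j) - (p i - p j) := by linarith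
      simp only at h1 h2
      nlinarith [mul_le_mul_of_nonneg_right h1 hden.le]
    clear_value p T ts
    set xt : ℝ → Fin N → ℝ := fun t => fun i => x i + t * (p i - x i) with hxt
    have aux : ∀ i j, x j < x i → ∀ t, 0 ≤ t → t ≤ ts →
        (0 ≤ xt t i - xt t j) ∧ (t < ts → 0 < xt t i - xt t j) := by
      intro i j hxij t ht0 hts'
      simp only [hxt]
      by_cases hz : z i ≤ z j
      · have hv := htv i j hz hxij
        have hd1 : p i - p j ≤ 0 := by have := hpmono _ _ hz; linarith
        have hden : 0 < (x i - x j) - (p i - p j) := by linarith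
        constructor
        · have h3 : t * ((x i - x j) - (p i - p j)) ≤ ts * ((x i - x j) - (p i - p j)) :=
            mul_le_mul_of_nonneg_right hts' hden.le
          nlinarith
        · intro htlt
          have h3 : t * ((x i - x j) - (p i - p j)) < ts * ((x i - x j) - (p i - p j)) :=
            mul_lt_mul_of_pos_right htlt hden
          nlinarith
      · push_neg at hz
        have hd1 : 0 ≤ p i - p j := by have := hpmono j i hz.le; linarith
        have ht1 : t ≤ 1 := le_trans hts' hts1
        constructor
        · nlinarith [mul_nonneg ht0 hd1, mul_nonneg (by linarith : (0:ℝ) ≤ 1 - t)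
            (by linarith : (0:ℝ) ≤ x i - x j)]
        · intro htlt
          have htlt1 : t < 1 := lt_of_lt_of_le htlt hts1
          nlinarith [mul_nonneg ht0 hd1, mul_pos (by linarith : (0:ℝ) < 1 - t)
            (by linarith : (0:ℝ) < x i - x j)]
    have auxeq : ∀ i j t, x i = x j → xt t i - xt t j = t * (p i - p j) := by
      intro i j t h
      simp only [hxt]
      rw [h]; ring
    set sg : Fin N → Fin N → ℝ := fun i j =>
      if x j < x i then 1 else if x i < x j then -1 else
      if p j < p i then 1 else if p i < p j then -1 else 0 with hsgdef
    have hsg3 : ∀ i j t, 0 < t → t < ts →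
        (sg i j = 1 ∧ xt t j < xt t i) ∨ (sg i j = -1 ∧ xt t i < xt t j) ∨
        (sg i j = 0 ∧ xt t i = xt t j) := by
      intro i j t ht0 htlt
      rcases lt_trichotomy (x i) (x j) with h | h | h
      · refine Or.inr (Or.inl ⟨?_, ?_⟩)
        · simp only [hsgdef]
          rw [if_neg (by linarith), if_pos h]
        · have := (aux j i h t ht0.le htlt.le).2 htlt
          linarith
      · rcases lt_trichotomy (p i) (p j) with h2 | h2 | h2
        · refine Or.inr (Or.inl ⟨?_, ?_⟩)
          · simp only [hsgdef]
            rw [if_neg (by linarith), if_neg (by linarith), if_neg (by linarith), if_pos h2]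
          · have hD := auxeq i j t h
            have : t * (p i - p j) < 0 := mul_neg_of_pos_of_neg ht0 (by linarith)
            linarith
        · refine Or.inr (Or.inr ⟨?_, ?_⟩)
          · simp only [hsgdef]
            rw [if_neg (by linarith), if_neg (by linarith), if_neg (by linarith),
              if_neg (by linarith)]
          · have hD := auxeq i j t h
            have hz0 : xt t i - xt t j = 0 := by rw [hD, h2]; ring
            linarith
        · refine Or.inl ⟨?_, ?_⟩
          · simp only [hsgdef]
            rw [if_neg (by linarith), if_neg (by linarith), if_pos h2]
          · have hD := auxeq i j t h
            have : 0 < t * (p i - p j) := mul_pos ht0 (by linarith)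
            linarith
      · refine Or.inl ⟨?_, ?_⟩
        · simp only [hsgdef]
          rw [if_pos h]
        · have := (aux i j h t ht0.le htlt.le).2 htlt
          linarith
    have hsg_weak : ∀ i j t, 0 ≤ t → t ≤ ts →
        sg i j * (xt t i - xt t j) = |xt t i - xt t j| := by
      intro i j t ht0 hts'
      rcases lt_trichotomy (x i) (x j) with h | h | h
      · have h1 := (aux j i h t ht0 hts').1
        have hs : sg i j = -1 := by
          simp only [hsgdef]
          rw [if_neg (by linarith), if_pos h]
        rw [hs, abs_of_nonpos (by linarith)]
        ring
      · have hD := auxeq i j t h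
        rcases lt_trichotomy (p i) (p j) with h2 | h2 | h2
        · have hs : sg i j = -1 := by
            simp only [hsgdef]
            rw [if_neg (by linarith), if_neg (by linarith), if_neg (by linarith), if_pos h2]
          have hle : t * (p i - p j) ≤ 0 :=
            mul_nonpos_of_nonneg_of_nonpos ht0 (by linarith)
          rw [hs, abs_of_nonpos (by linarith)]
          ring
        · have hs : sg i j = 0 := by
            simp only [hsgdef]
            rw [if_neg (by linarith), if_neg (by linarith), if_neg (by linarith),
              if_neg (by linarith)]
          have hz : xt t i - xt t j = 0 := by rw [hD, h2]; ring
          rw [hs, hz]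
          simp
        · have hs : sg i j = 1 := by
            simp only [hsgdef]
            rw [if_neg (by linarith), if_neg (by linarith), if_pos h2]
          have hge : 0 ≤ t * (p i - p j) := mul_nonneg ht0 (by linarith)
          rw [hs, abs_of_nonneg (by linarith)]
          ring
      · have h1 := (aux i j h t ht0 hts').1
        have hs : sg i j = 1 := by
          simp only [hsgdef]
          rw [if_pos h]
        rw [hs, abs_of_nonneg (by linarith)]
        ring
    set t2 := ts / 2 with ht2
    have ht20 : 0 < t2 := half_pos hts0
    have ht2lt : t2 < ts := half_lt_self hts0
    set u := xt t2 with hu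
    set Lu := Lr f (patB u) with hLudef
    set Lz := Lr f (patB z) with hLzdef
    have hu_ok : okL f (patB u) Lu := Lr_spec (exists_okL hflin hhom u)
    have hfxt : ∀ t, 0 < t → t < ts → f (xt t) = Lu (xt t) := by
      intro t h1 h2
      apply hu_ok
      intro i j
      simp only [patB, decide_eq_true_eq]
      rcases hsg3 i j t h1 h2 with ⟨hs, hd⟩ | ⟨hs, hd⟩ | ⟨hs, hd⟩ <;>
        rcases hsg3 i j t2 ht20 ht2lt with ⟨hs2, hd2⟩ | ⟨hs2, hd2⟩ | ⟨hs2, hd2⟩ <;>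
        rw [hs] at hs2 <;>
        first
          | (rw [hu]; constructor <;> intro <;> linarith)
          | norm_num at hs2
    have hfx : f x = Lu x := by
      apply cont_limit hfc Lu x (fun i => p i - x i) ts hts0
      intro t h1 h2
      have h3 := hfxt t h1 h2
      rw [hxt] at h3
      exact h3
    set x' := xt ts with hx'
    have hfx' : f x' = Lu x' := by
      apply cont_limit hfc Lu x' (fun i => x i - p i) ts hts0
      intro s h1 h2
      have he : (fun i => x' i + s * (x i - p i)) = xt (ts - s) := by
        funext i
        rw [hx', hxt]
        simp only
        ring
      rw [he]
      exact hfxt (ts - s) (by linarith) (by linarith)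
    have hsgn_u : ∀ i j, sgn u i j = sg i j := by
      intro i j
      rcases hsg3 i j t2 ht20 ht2lt with ⟨hs, hd⟩ | ⟨hs, hd⟩ | ⟨hs, hd⟩ <;> rw [hs] <;>
        unfold sgn <;> rw [hu]
      · rw [if_pos hd]
      · rw [if_neg (by linarith), if_pos hd]
      · rw [if_neg (by linarith), if_neg (by linarith)]
    have hSx : SS x = Sz u x := by
      apply SS_eq_Sz
      intro i j
      rw [hsgn_u]
      have hw := hsg_weak i j 0 le_rfl hts0.le
      have h0i : xt 0 i = x i := by rw [hxt]; simp
      have h0j : xt 0 j = x j := by rw [hxt]; simp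
      rw [h0i, h0j] at hw
      exact hw
    have hSx' : SS x' = Sz u x' := by
      apply SS_eq_Sz
      intro i j
      rw [hsgn_u, hx']
      exact hsg_weak i j ts hts0.le le_rfl
    set v : Fin N → ℝ := fun i => x i - x' i with hv
    have hvi : ∀ i, v i = ts * (x i - p i) := by
      intro i
      rw [hv, hx', hxt]
      simp only
      ring
    obtain ⟨q0, hq0⟩ := hne
    obtain ⟨i0, -, hi0⟩ := Finset.exists_max_image Finset.univ (fun i => p i - x i)
      ⟨q0.1, Finset.mem_univ _⟩
    obtain ⟨j0, hzj0, hpj0⟩ := proj_exists z x i0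
    set V := p i0 - x i0 with hV
    have hVmax : ∀ i, p i - x i ≤ V := fun i => hi0 i (Finset.mem_univ i)
    have hVpos : 0 < V := by
      obtain ⟨hz12, hx21⟩ := mem_Viol.mp hq0
      have h1 : x q0.1 ≤ p q0.2 := by rw [hp]; exact proj_ge' z x hz12
      have h2 := hVmax q0.2
      linarith
    have hVval : V = x j0 - x i0 := by
      rw [hV, hp, hpj0]
    have hMv : ∀ i, |v i| ≤ ts * V := by
      intro i
      rw [hvi i, abs_mul, abs_of_pos hts0, abs_of_nonpos (by have := hpge i; linarith)]
      have h2 : -(x i - p i) ≤ V := by have := hVmax i; linarith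
      exact mul_le_mul_of_nonneg_left h2 hts0.le
    have hterm : ∀ q : Fin N × Fin N, 0 ≤ (sgn u q.1 q.2 - sgn z q.1 q.2) * (v q.1 - v q.2) := by
      intro q
      obtain ⟨i, j⟩ := q
      simp only
      rw [hsgn_u]
      have hvd : v i - v j = ts * ((x i - x j) - (p i - p j)) := by
        rw [hvi i, hvi j]; ring
      rw [hvd]
      rcases lt_trichotomy (x i) (x j) with h | h | h
      · have hs : sg i j = -1 := by
          simp only [hsgdef]; rw [if_neg (by linarith), if_pos h]
        rw [hs]
        unfold sgn
        by_cases h1 : z j < z i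
        · rw [if_pos h1]
          have hm : p j ≤ p i := hpmono j i h1.le
          nlinarith
        · rw [if_neg h1]
          by_cases h2 : z i < z j
          · rw [if_pos h2]; norm_num
          · rw [if_neg h2]
            have he1 : z i ≤ z j := not_lt.mp h1
            have he2 : z j ≤ z i := not_lt.mp h2
            have hm : p i = p j := le_antisymm (hpmono i j he1) (hpmono j i he2)
            rw [hm]
            nlinarith
      · rcases lt_trichotomy (p i) (p j) with h2 | h2 | h2
        · have hs : sg i j = -1 := by
            simp only [hsgdef]
            rw [if_neg (by linarith), if_neg (by linarith), if_neg (by linarith), if_pos h2]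
          have hzz : z i < z j := by
            by_contra hc
            push_neg at hc
            have := hpmono j i hc
            linarith
          rw [hs]
          unfold sgn
          rw [if_neg (by linarith), if_pos hzz]
          norm_num
        · rw [h, h2]
          norm_num
        · have hs : sg i j = 1 := by
            simp only [hsgdef]
            rw [if_neg (by linarith), if_neg (by linarith), if_pos h2]
          have hzz : z j < z i := by
            by_contra hc
            push_neg at hc
            have := hpmono i j hc
            linarith
          rw [hs]
          unfold sgn
          rw [if_pos hzz]
          norm_num
      · have hs : sg i j = 1 := by
          simp only [hsgdef]; rw [if_pos h]
        rw [hs]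
        unfold sgn
        by_cases h1 : z j < z i
        · rw [if_pos h1]; norm_num
        · rw [if_neg h1]
          have he1 : z i ≤ z j := not_lt.mp h1
          have hm : p i ≤ p j := hpmono i j he1
          by_cases h2 : z i < z j
          · rw [if_pos h2]
            nlinarith
          · rw [if_neg h2]
            nlinarith
    have hbigterm : ∃ qq ∈ Finset.univ.filter (fun r : Fin N × Fin N => r.1 < r.2),
        ts * V ≤ (sgn u qq.1 qq.2 - sgn z qq.1 qq.2) * (v qq.1 - v qq.2) := by
      have hxji : x i0 < x j0 := by
        have := hVval
        linarith
      have hne0 : j0 ≠ i0 := fun he => by rw [he] at hxji; exact lt_irrefl _ hxji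
      have hd1m : p j0 ≤ p i0 := hpmono j0 i0 hzj0
      rcases lt_or_gt_of_ne hne0 with hlt | hgt
      · refine ⟨(j0, i0), by simp [hlt], ?_⟩
        simp only
        have hs : sg j0 i0 = 1 := by
          simp only [hsgdef]; rw [if_pos hxji]
        rw [hsgn_u, hs]
        have hvd : v j0 - v i0 = ts * ((x j0 - x i0) - (p j0 - p i0)) := by
          rw [hvi j0, hvi i0]; ring
        rw [hvd]
        have hsz : sgn z j0 i0 ≤ 0 := by
          unfold sgn
          rw [if_neg (not_lt.mpr hzj0)]
          split_ifs <;> norm_num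
        have hVle : V ≤ (x j0 - x i0) - (p j0 - p i0) := by linarith
        have hA : ts * V ≤ ts * ((x j0 - x i0) - (p j0 - p i0)) :=
          mul_le_mul_of_nonneg_left hVle hts0.le
        have hA0 : 0 ≤ ts * ((x j0 - x i0) - (p j0 - p i0)) :=
          le_trans (mul_pos hts0 hVpos).le hA
        nlinarith [mul_nonneg (by linarith : (0:ℝ) ≤ -sgn z j0 i0) hA0]
      · refine ⟨(i0, j0), by simp [hgt], ?_⟩
        simp only
        have hs : sg i0 j0 = -1 := by
          simp only [hsgdef]; rw [if_neg (by linarith), if_pos hxji]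
        rw [hsgn_u, hs]
        have hvd : v i0 - v j0 = ts * ((x i0 - x j0) - (p i0 - p j0)) := by
          rw [hvi i0, hvi j0]; ring
        rw [hvd]
        have hsz : 0 ≤ sgn z i0 j0 := by
          unfold sgn
          split_ifs with h1 h2
          · norm_num
          · exact absurd h2 (not_lt.mpr hzj0)
          · norm_num
        have hVle : V ≤ (x j0 - x i0) - (p j0 - p i0) := by linarith
        have hA : ts * V ≤ ts * ((x j0 - x i0) - (p j0 - p i0)) :=
          mul_le_mul_of_nonneg_left hVle hts0.le
        have hA0 : 0 ≤ ts * ((x j0 - x i0) - (p j0 - p i0)) :=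
          le_trans (mul_pos hts0 hVpos).le hA
        have hB : ts * (x i0 - x j0 - (p i0 - p j0)) =
            -(ts * ((x j0 - x i0) - (p j0 - p i0))) := by ring
        rw [hB]
        nlinarith [mul_nonneg hsz hA0]
    obtain ⟨qq, hqqmem, hqqbig⟩ := hbigterm
    have hsum : Sz u v - Sz z v =
        ∑ q ∈ Finset.univ.filter (fun r : Fin N × Fin N => r.1 < r.2),
          (sgn u q.1 q.2 - sgn z q.1 q.2) * (v q.1 - v q.2) := by
      unfold Sz
      rw [← Finset.sum_sub_distrib]
      exact Finset.sum_congr rfl (fun q _ => by ring)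
    have hDbound : ts * V ≤ Sz u v - Sz z v := by
      rw [hsum]
      calc ts * V ≤ (sgn u qq.1 qq.2 - sgn z qq.1 qq.2) * (v qq.1 - v qq.2) := hqqbig
        _ ≤ _ := Finset.single_le_sum (fun q _ => hterm q) hqqmem
    have hsub : Viol z x' ⊆ Viol z x := by
      intro q hq
      obtain ⟨hz12, hx21⟩ := mem_Viol.mp hq
      refine mem_Viol.mpr ⟨hz12, ?_⟩
      rw [hx'] at hx21
      by_contra hc
      push_neg at hc
      rcases eq_or_lt_of_le hc with he | hlt
      · have hd1 : p q.1 - p q.2 ≤ 0 := by have := hpmono _ _ hz12; linarith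
        have hD := auxeq q.1 q.2 ts he
        have h3 : ts * (p q.1 - p q.2) ≤ 0 :=
          mul_nonpos_of_nonneg_of_nonpos hts0.le hd1
        linarith
      · have h4 := (aux q.2 q.1 hlt ts hts0.le le_rfl).1
        linarith
    have hnm : qm ∉ Viol z x' := by
      intro hmem
      obtain ⟨hz12, hx21⟩ := mem_Viol.mp hmem
      have h2 := (hTfact qm hqmm).2.2
      have hts_eq : ts = T qm := hqme
      rw [hx'] at hx21
      have hcomp : xt ts qm.1 - xt ts qm.2 =
          (x qm.1 - x qm.2) - ts * ((x qm.1 - x qm.2) - (p qm.1 - p qm.2)) := by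
        rw [hxt]; simp only; ring
      have hzero : xt ts qm.1 - xt ts qm.2 = 0 := by
        rw [hcomp, hts_eq, h2]; ring
      linarith
    have hcard' : (Viol z x').card ≤ n := by
      have hlt := Finset.card_lt_card ((Finset.ssubset_iff_of_subset hsub).mpr ⟨qm, hqmm, hnm⟩)
      omega
    have hIH := ih z x' hcard'
    have hvxx : v = x - x' := by
      funext i
      rw [hv]
      simp
    have hLzv : Lz v = Lz x - Lz x' := by rw [hvxx, map_sub]
    have hLuv : Lu v = Lu x - Lu x' := by rw [hvxx, map_sub]
    have hSzv : Sz z v = Sz z x - Sz z x' := by rw [hv]; exact Sz_sub z x x'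
    have hSuv : Sz u v = Sz u x - Sz u x' := by rw [hv]; exact Sz_sub u x x'
    have hb1 := L_bound Lz v (ts * V) hMv
    have hb2 := L_bound Lu v (ts * V) hMv
    have hCz : CL Lz ≤ CC f := by rw [hLzdef]; exact CL_le_CC f (patB z)
    have hCu : CL Lu ≤ CC f := by rw [hLudef]; exact CL_le_CC f (patB u)
    have htsV0 : 0 ≤ ts * V := (mul_pos hts0 hVpos).le
    have hD0 : 0 ≤ Sz u v - Sz z v := le_trans htsV0 hDbound
    have key1 : Lz v - Lu v ≤ (CL Lz + CL Lu) * (ts * V) := by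
      have k1 := le_abs_self (Lz v)
      have k2 := neg_abs_le (Lu v)
      nlinarith
    have key2 : (CL Lz + CL Lu) * (ts * V) ≤ 2 * CC f * (ts * V) := by
      nlinarith
    have key3 : 2 * CC f * (ts * V) ≤ 2 * CC f * (Sz u v - Sz z v) := by
      nlinarith [CC_nonneg f]
    have key4 : 2 * CC f * (Sz u v - Sz z v) ≤ (2 * CC f + 1) * (Sz u v - Sz z v) := by
      nlinarith
    have hring : (2 * CC f + 1) * (SS x - Sz z x) =
        (2 * CC f + 1) * (SS x' - Sz z x') + (2 * CC f + 1) * (Sz u v - Sz z v) := by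
      have hDe : Sz u v - Sz z v = (SS x - SS x') - (Sz z x - Sz z x') := by
        rw [hSuv, hSzv, hSx, hSx']
      rw [hDe]; ring
    linarith


theorem stmt_15' (N : ℕ) (f : (Fin N → ℝ) → ℝ)
    (hfc : Continuous f) (hflin : LinOnCells f)
    (hhom : ∀ (lam : ℝ) (x : Fin N → ℝ), 0 ≤ lam → f (fun i => lam * x i) = lam * f x) :
    ∃ c : ℝ, 0 < c ∧ ConvexOn ℝ Set.univ (fun x : Fin N → ℝ =>
      c * (∑ p ∈ Finset.univ.filter (fun p : Fin N × Fin N => p.1 < p.2), |x p.1 - x p.2|)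
        + f x) := by
  refine ⟨2 * CC f + 1, by have := CC_nonneg f; linarith, convex_univ, ?_⟩
  intro x _ y _ a b ha hb hab
  set c := 2 * CC f + 1 with hc
  set w : Fin N → ℝ := fun i => a * x i + b * y i with hw
  have hwts : a • x + b • y = w := by
    funext i
    simp [hw, smul_eq_mul]
  simp only [smul_eq_mul]
  show c * SS (a • x + b • y) + f (a • x + b • y) ≤
    a * (c * SS x + f x) + b * (c * SS y + f y)
  rw [hwts]
  have hok : okL f (patB w) (Lr f (patB w)) := Lr_spec (exists_okL hflin hhom w)
  have hfw : f w = Lr f (patB w) w := hok w (fun i j => by simp [patB])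
  have hkx := key hfc hflin hhom (Viol w x).card w x le_rfl
  have hky := key hfc hflin hhom (Viol w y).card w y le_rfl
  rw [← hc] at hkx hky
  have hSw : SS w = Sz w w := Sz_self w
  have hLw : Lr f (patB w) w = a * Lr f (patB w) x + b * Lr f (patB w) y := by
    rw [← hwts, map_add, map_smul, map_smul, smul_eq_mul, smul_eq_mul]
  have hSzw : Sz w w = a * Sz w x + b * Sz w y := by
    rw [hw]
    exact Sz_comb _ x y a b
  have hx1 : c * Sz w x + Lr f (patB w) x ≤ c * SS x + f x := by linarith
  have hy1 : c * Sz w y + Lr f (patB w) y ≤ c * SS y + f y := by linarith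
  have hx2 : a * (c * Sz w x + Lr f (patB w) x) ≤ a * (c * SS x + f x) :=
    mul_le_mul_of_nonneg_left hx1 ha
  have hy2 : b * (c * Sz w y + Lr f (patB w) y) ≤ b * (c * SS y + f y) :=
    mul_le_mul_of_nonneg_left hy1 hb
  have hdecomp : c * SS w + f w =
      a * (c * Sz w x + Lr f (patB w) x) + b * (c * Sz w y + Lr f (patB w) y) := by
    rw [hfw, hSw, hSzw, hLw]
    ring
  linarith

end S15

theorem stmt_15 (N : ℕ) (f : (Fin N → ℝ) → ℝ)
    (hfc : Continuous f) (hflin : LinOnCells f)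
    (hhom : ∀ (lam : ℝ) (x : Fin N → ℝ), 0 ≤ lam → f (fun i => lam * x i) = lam * f x)
    (hshift : ∀ (x : Fin N → ℝ) (h : ℝ), f (fun i => x i + h) = f x) :
    ∃ c : ℝ, 0 < c ∧ ConvexOn ℝ Set.univ (fun x : Fin N → ℝ =>
      c * (∑ p ∈ Finset.univ.filter (fun p : Fin N × Fin N => p.1 < p.2), |x p.1 - x p.2|)
        + f x) := by
  exact S15.stmt_15' N f hfc hflin hhom
end
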